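/- arXiv:1308.4617 — 9 statements merged into one kernel-verified Lean document; each statement's English description precedes it below -/
import Mathlib

section
/- Let F be a field, A an m×m matrix and B an n×n matrix over F, and consider the linear operator on M_{m,n}(F) given by C ↦ ACB. If all eigenvalues of A and B lie in F, then all eigenvalues of this operator lie in F, and every such eigenvalue has the form αβ where α is an eigenvalue of A and β is an eigenvalue of B. -/
open Polynomial

/-- The linear operator `C ↦ A C B` on the space of `m × n` matrices. -/
def lrMul {F : Type*} [Field F] {m n : ℕ}
    (A : Matrix (Fin m) (Fin m) F) (B : Matrix (Fin n) (Fin n) F) :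
    Matrix (Fin m) (Fin n) F →ₗ[F] Matrix (Fin m) (Fin n) F where
  toFun C := A * C * B
  map_add' C D := by simp [Matrix.mul_add, Matrix.add_mul]
  map_smul' c C := by simp [Matrix.mul_smul, Matrix.smul_mul]


section MatrixLemmas

variable {K : Type*} [Field K] {n : Type*} [Fintype n] [DecidableEq n]

lemma eval_charpoly' (A : Matrix n n K) (μ : K) :
    A.charpoly.eval μ = (Matrix.scalar n μ - A).det := by
  rw [Matrix.charpoly, eval_det, Matrix.matPolyEquiv_charmatrix]
  simp

lemma isRoot_charpoly_iff (A : Matrix n n K) (μ : K) :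
    A.charpoly.IsRoot μ ↔ ∃ v, v ≠ 0 ∧ A.mulVec v = μ • v := by
  rw [IsRoot, eval_charpoly', ← Matrix.exists_mulVec_eq_zero_iff]
  constructor
  · rintro ⟨v, hv, h⟩
    refine ⟨v, hv, ?_⟩
    have := h
    rw [Matrix.sub_mulVec] at this
    have h2 : Matrix.mulVec (Matrix.scalar n μ) v = μ • v := by
      funext i
      simp [Matrix.scalar, Matrix.mulVec_diagonal, Pi.algebraMap_apply]
    rw [h2] at this
    exact (sub_eq_zero.mp this).symm
  · rintro ⟨v, hv, h⟩
    refine ⟨v, hv, ?_⟩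
    rw [Matrix.sub_mulVec, h]
    have h2 : Matrix.mulVec (Matrix.scalar n μ) v = μ • v := by
      funext i
      simp [Matrix.scalar, Matrix.mulVec_diagonal, Pi.algebraMap_apply]
    rw [h2, sub_self]

lemma charpoly_transpose' (A : Matrix n n K) : (A.transpose).charpoly = A.charpoly := by
  rw [Matrix.charpoly, Matrix.charpoly, ← Matrix.det_transpose (Matrix.charmatrix A)]
  congr 1
  ext i j
  by_cases h : i = j
  · subst h; simp
  · simp [Matrix.charmatrix_apply, Matrix.transpose_apply, Matrix.diagonal_apply, h, Ne.symm h]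

end MatrixLemmas

section EndLemmas

variable {K : Type*} [Field K] {V : Type*} [AddCommGroup V] [Module K V] [FiniteDimensional K V]

lemma hasEigenvalue_of_isRoot_charpoly {f : Module.End K V} {μ : K}
    (h : f.charpoly.IsRoot μ) : f.HasEigenvalue μ := by
  let b := Module.finBasis K V
  rw [← LinearMap.charpoly_toMatrix f b] at h
  obtain ⟨v, hv, hAv⟩ := (isRoot_charpoly_iff _ μ).mp h
  set x := b.equivFun.symm v with hx
  have hrepr : ⇑(b.repr x) = v := by
    have := b.equivFun.apply_symm_apply v
    rw [Module.Basis.equivFun_apply] at this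
    exact this
  have hx0 : x ≠ 0 := by
    intro h0
    apply hv
    rw [← hrepr, h0]
    simp
  have hfx : f x = μ • x := by
    apply b.repr.injective
    have h1 := LinearMap.toMatrix_mulVec_repr b b f x
    rw [hrepr, hAv] at h1
    ext i
    rw [← h1]
    simp [hrepr]
  exact Module.End.hasEigenvalue_of_hasEigenvector ⟨Module.End.mem_eigenspace_iff.mpr hfx, hx0⟩

lemma isRoot_charpoly_of_hasEigenvalue {f : Module.End K V} {μ : K}
    (h : f.HasEigenvalue μ) : f.charpoly.IsRoot μ := by
  have h1 : (minpoly K f).IsRoot μ := (Module.End.hasEigenvalue_iff_isRoot).mp h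
  obtain ⟨q, hq⟩ := LinearMap.minpoly_dvd_charpoly f
  rw [hq]
  simp [IsRoot.def] at h1 ⊢
  left
  exact h1

/-- Core structure lemma: over an algebraically closed field, every eigenvalue of a product
of two commuting endomorphisms is a product of eigenvalues. -/
lemma eigenvalue_mul_of_commute [IsAlgClosed K] {f g : Module.End K V}
    (hfg : f * g = g * f) {γ : K} (hγ : Module.End.HasEigenvalue (f * g) γ) :
    ∃ α β : K, f.HasEigenvalue α ∧ g.HasEigenvalue β ∧ γ = α * β := by
  classical
  have hcomm : ∀ y, f (g y) = g (f y) := fun y => LinearMap.ext_iff.mp hfg y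
  set U : Submodule K V := Module.End.eigenspace (f * g) γ with hU
  have hUne : U ≠ ⊥ := hγ
  haveI : Nontrivial U := Submodule.nontrivial_iff_ne_bot.mpr hUne
  have memU : ∀ x, x ∈ U ↔ f (g x) = γ • x := fun x => Module.End.mem_eigenspace_iff
  have hfU : ∀ x ∈ U, f x ∈ U := by
    intro x hx
    rw [memU] at hx ⊢
    rw [← hcomm, hx, map_smul]
  obtain ⟨α, hα⟩ := Module.End.exists_eigenvalue (f.restrict hfU)
  obtain ⟨u, hu⟩ := hα.exists_hasEigenvector
  set E : Submodule K V := Module.End.eigenspace f α ⊓ U with hE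
  have huE : (u : V) ∈ E := by
    apply Submodule.mem_inf.mpr
    constructor
    · have h2 : f (u : V) = α • (u : V) := by
        have := congrArg (Subtype.val) hu.apply_eq_smul
        simpa [LinearMap.restrict_coe_apply] using this
      exact Module.End.mem_eigenspace_iff.mpr h2
    · exact u.2
  haveI : Nontrivial E := by
    apply Submodule.nontrivial_iff_ne_bot.mpr
    intro hbot
    have h0 : (u : V) = 0 := by rw [← Submodule.mem_bot (R := K), ← hbot]; exact huE
    exact hu.2 (Submodule.coe_eq_zero.mp h0)
  have hgE : ∀ x ∈ E, g x ∈ E := by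
    intro x hx
    obtain ⟨hx1, hx2⟩ := Submodule.mem_inf.mp hx
    have hfx : f x = α • x := Module.End.mem_eigenspace_iff.mp hx1
    apply Submodule.mem_inf.mpr
    constructor
    · apply Module.End.mem_eigenspace_iff.mpr
      rw [hcomm, hfx, map_smul]
    · rw [memU] at hx2 ⊢
      rw [hcomm (g x), hx2, map_smul]
  obtain ⟨β, hβ⟩ := Module.End.exists_eigenvalue (g.restrict hgE)
  obtain ⟨w, hw⟩ := hβ.exists_hasEigenvector
  have hw0 : (w : V) ≠ 0 := fun h0 => hw.2 (Submodule.coe_eq_zero.mp h0)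
  have hgw : g (w : V) = β • (w : V) := by
    have := congrArg (Subtype.val) hw.apply_eq_smul
    simpa [LinearMap.restrict_coe_apply] using this
  obtain ⟨hw1, hw2⟩ := Submodule.mem_inf.mp w.2
  have hfw : f (w : V) = α • (w : V) := Module.End.mem_eigenspace_iff.mp hw1
  have hγw : f (g (w : V)) = γ • (w : V) := (memU _).mp hw2
  refine ⟨α, β, ?_, ?_, ?_⟩
  · exact Module.End.hasEigenvalue_of_hasEigenvector ⟨Module.End.mem_eigenspace_iff.mpr hfw, hw0⟩
  · exact Module.End.hasEigenvalue_of_hasEigenvector ⟨Module.End.mem_eigenspace_iff.mpr hgw, hw0⟩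
  · have : γ • (w : V) = (α * β) • (w : V) := by
      rw [← hγw, hgw, map_smul, hfw, smul_smul, mul_comm]
    exact smul_left_injective K hw0 this

end EndLemmas

section LrMul

variable {F : Type*} [Field F] {m n : ℕ}

lemma lrMul_apply (A : Matrix (Fin m) (Fin m) F) (B : Matrix (Fin n) (Fin n) F)
    (C : Matrix (Fin m) (Fin n) F) : lrMul A B C = A * C * B := rfl

lemma stdBasis_repr' (M : Matrix (Fin m) (Fin n) F) (p : Fin m × Fin n) :
    (Matrix.stdBasis F (Fin m) (Fin n)).repr M p = M p.1 p.2 := by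
  have hM : M = ∑ q : Fin m × Fin n, M q.1 q.2 • Matrix.stdBasis F (Fin m) (Fin n) q := by
    rw [Fintype.sum_prod_type]
    simp_rw [Matrix.stdBasis_eq_single, Matrix.smul_single, smul_eq_mul, mul_one]
    exact Matrix.matrix_eq_sum_single M
  conv_lhs => rw [hM]
  rw [Module.Basis.repr_sum_self]

lemma toMatrix_lrMul (A : Matrix (Fin m) (Fin m) F) (B : Matrix (Fin n) (Fin n) F)
    (p q : Fin m × Fin n) :
    LinearMap.toMatrix (Matrix.stdBasis F (Fin m) (Fin n)) (Matrix.stdBasis F (Fin m) (Fin n))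
      (lrMul A B) p q = A p.1 q.1 * B q.2 p.2 := by
  rw [LinearMap.toMatrix_apply, stdBasis_repr']
  rw [show (Matrix.stdBasis F (Fin m) (Fin n)) q = Matrix.single q.1 q.2 1 from
    Matrix.stdBasis_eq_single F q.1 q.2]
  rw [lrMul_apply]
  simp [Matrix.mul_apply, Matrix.single, Finset.sum_mul, mul_ite, ite_mul, ite_and,
    Finset.sum_ite_eq, Matrix.of_apply]

lemma charpoly_lrMul_map {K : Type*} [Field K] (φ : F →+* K)
    (A : Matrix (Fin m) (Fin m) F) (B : Matrix (Fin n) (Fin n) F) :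
    ((lrMul A B).charpoly).map φ = (lrMul (A.map φ) (B.map φ)).charpoly := by
  rw [← LinearMap.charpoly_toMatrix (lrMul A B) (Matrix.stdBasis F (Fin m) (Fin n)),
    ← LinearMap.charpoly_toMatrix (lrMul (A.map φ) (B.map φ)) (Matrix.stdBasis K (Fin m) (Fin n)),
    ← Matrix.charpoly_map]
  congr 1
  ext p q
  rw [Matrix.map_apply, toMatrix_lrMul, toMatrix_lrMul, Matrix.map_apply, Matrix.map_apply,
    map_mul]

lemma lrMul_eq_mul (A : Matrix (Fin m) (Fin m) F) (B : Matrix (Fin n) (Fin n) F) :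
    (lrMul A B : Module.End F (Matrix (Fin m) (Fin n) F)) = lrMul A 1 * lrMul 1 B := by
  apply LinearMap.ext
  intro C
  show lrMul A B C = lrMul A 1 (lrMul 1 B C)
  simp [lrMul_apply, Matrix.mul_assoc]

lemma lrMul_comm (A : Matrix (Fin m) (Fin m) F) (B : Matrix (Fin n) (Fin n) F) :
    (lrMul A 1 * lrMul 1 B : Module.End F (Matrix (Fin m) (Fin n) F)) = lrMul 1 B * lrMul A 1 := by
  apply LinearMap.ext
  intro C
  show lrMul A 1 (lrMul 1 B C) = lrMul 1 B (lrMul A 1 C)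
  simp [lrMul_apply, Matrix.mul_assoc]

end LrMul

lemma matrix_ne_zero_iff {F : Type*} [Field F] {m n : ℕ} {w : Matrix (Fin m) (Fin n) F} :
    w ≠ 0 ↔ ∃ i j, w i j ≠ 0 := by
  constructor
  · intro h
    by_contra hc
    push_neg at hc
    exact h (by ext i j; simpa using hc i j)
  · rintro ⟨i, j, h⟩ rfl
    exact h rfl

lemma rootStruct {K : Type*} [Field K] [IsAlgClosed K] {m n : ℕ}
    (A : Matrix (Fin m) (Fin m) K) (B : Matrix (Fin n) (Fin n) K) {γ : K}
    (h : (lrMul A B).charpoly.IsRoot γ) :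
    ∃ α β : K, A.charpoly.IsRoot α ∧ B.charpoly.IsRoot β ∧ γ = α * β := by
  have hEig : Module.End.HasEigenvalue (lrMul A 1 * lrMul 1 B) γ := by
    rw [← lrMul_eq_mul]
    exact hasEigenvalue_of_isRoot_charpoly h
  obtain ⟨α, β, hα, hβ, hγ⟩ := eigenvalue_mul_of_commute (lrMul_comm A B) hEig
  refine ⟨α, β, ?_, ?_, hγ⟩
  · obtain ⟨w, hw⟩ := hα.exists_hasEigenvector
    have hAw : A * w = α • w := by
      have := hw.apply_eq_smul
      rw [lrMul_apply] at this
      rwa [Matrix.mul_one] at this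
    obtain ⟨i, j, hij⟩ := matrix_ne_zero_iff.mp hw.2
    rw [isRoot_charpoly_iff]
    refine ⟨fun i' => w i' j, ?_, ?_⟩
    · intro hc
      exact hij (congrFun hc i)
    · funext i'
      have h1 : (A * w) i' j = (α • w) i' j := by rw [hAw]
      rw [Matrix.mul_apply] at h1
      simpa [Matrix.mulVec, dotProduct] using h1
  · obtain ⟨w, hw⟩ := hβ.exists_hasEigenvector
    have hBw : w * B = β • w := by
      have := hw.apply_eq_smul
      rw [lrMul_apply] at this
      rwa [Matrix.one_mul] at this
    obtain ⟨i, j, hij⟩ := matrix_ne_zero_iff.mp hw.2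
    rw [← charpoly_transpose', isRoot_charpoly_iff]
    refine ⟨fun j' => w i j', ?_, ?_⟩
    · intro hc
      exact hij (congrFun hc j)
    · funext j'
      have h1 : (w * B) i j' = (β • w) i j' := by rw [hBw]
      rw [Matrix.mul_apply] at h1
      simp only [Matrix.mulVec, dotProduct, Matrix.transpose_apply]
      simp only [Matrix.smul_apply, smul_eq_mul] at h1
      simp only [Pi.smul_apply, smul_eq_mul]
      rw [← h1]
      exact Finset.sum_congr rfl fun k _ => mul_comm _ _

lemma multiset_exists_preimage {α β : Type*} (f : α → β) (s : Multiset β)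
    (h : ∀ x ∈ s, ∃ a, f a = x) : ∃ t : Multiset α, t.map f = s := by
  induction s using Multiset.induction_on with
  | empty => exact ⟨0, rfl⟩
  | cons b s ih =>
    obtain ⟨a, ha⟩ := h b (Multiset.mem_cons_self b s)
    obtain ⟨t, ht⟩ := ih fun x hx => h x (Multiset.mem_cons_of_mem hx)
    exact ⟨a ::ₘ t, by rw [Multiset.map_cons, ha, ht]⟩


/-- If all eigenvalues of `A` and `B` lie in `F`, then all eigenvalues of the operator
`C ↦ A C B` lie in `F`, and each of them is a product `α * β` of an eigenvalue `α` of `A`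
and an eigenvalue `β` of `B`. -/
theorem stmt0 {F : Type*} [Field F] {m n : ℕ}
    (A : Matrix (Fin m) (Fin m) F) (B : Matrix (Fin n) (Fin n) F)
    (hA : A.charpoly.Splits) (hB : B.charpoly.Splits) :
    (lrMul A B).charpoly.Splits ∧
      ∀ γ ∈ (lrMul A B).charpoly.roots,
        ∃ α ∈ A.charpoly.roots, ∃ β ∈ B.charpoly.roots, γ = α * β := by
  classical
  set K := AlgebraicClosure F
  set φ : F →+* K := algebraMap F K with hφ
  set p := (lrMul A B).charpoly with hp
  have hpmonic : p.Monic := LinearMap.charpoly_monic _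
  have hmap : p.map φ = (lrMul (A.map φ) (B.map φ)).charpoly := charpoly_lrMul_map φ A B
  -- key: every root of `p.map φ` is `φ α * φ β` for roots α, β over F
  have keyRoots : ∀ γ' : K, (p.map φ).IsRoot γ' →
      ∃ α ∈ A.charpoly.roots, ∃ β ∈ B.charpoly.roots, γ' = φ α * φ β := by
    intro γ' hroot
    rw [hmap] at hroot
    obtain ⟨α', β', hα', hβ', hγ'⟩ := rootStruct (A.map φ) (B.map φ) hroot
    rw [Matrix.charpoly_map] at hα' hβ'
    have hαmem : α' ∈ (A.charpoly.map φ).roots := by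
      rw [mem_roots ((A.charpoly_monic.map φ).ne_zero)]
      exact hα'
    have hβmem : β' ∈ (B.charpoly.map φ).roots := by
      rw [mem_roots ((B.charpoly_monic.map φ).ne_zero)]
      exact hβ'
    rw [hA.roots_map φ] at hαmem
    rw [hB.roots_map φ] at hβmem
    obtain ⟨α, hαm, rfl⟩ := Multiset.mem_map.mp hαmem
    obtain ⟨β, hβm, rfl⟩ := Multiset.mem_map.mp hβmem
    exact ⟨α, hαm, β, hβm, hγ'⟩
  constructor
  · -- splits
    obtain ⟨s, hs⟩ := splits_iff_exists_multiset.mp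
      (IsAlgClosed.splits (p.map φ))
    have hlead : (p.map φ).leadingCoeff = 1 := (hpmonic.map φ)
    rw [hlead, map_one, one_mul] at hs
    have hsr : ∀ γ' ∈ s, ∃ a : F, φ a = γ' := by
      intro γ' hγ'
      have hdvd : (X - C γ') ∣ p.map φ := by
        rw [hs]
        exact Multiset.dvd_prod (Multiset.mem_map_of_mem _ hγ')
      have hroot : (p.map φ).IsRoot γ' := dvd_iff_isRoot.mp hdvd
      obtain ⟨α, -, β, -, h⟩ := keyRoots γ' hroot
      exact ⟨α * β, by rw [map_mul, h]⟩
    obtain ⟨t, ht⟩ := multiset_exists_preimage φ s hsr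
    have hpeq : p = (t.map fun a => X - C a).prod := by
      apply Polynomial.map_injective φ φ.injective
      rw [hs, ← ht]
      rw [← Polynomial.coe_mapRingHom, map_multiset_prod, Multiset.map_map, Multiset.map_map]
      congr 1
      apply Multiset.map_congr rfl
      intro a _
      simp
    apply splits_iff_exists_multiset.mpr
    refine ⟨t, ?_⟩
    rw [hpmonic.leadingCoeff, map_one, one_mul]
    exact hpeq
  · -- roots are products
    intro γ hγ
    have hroot : p.IsRoot γ := isRoot_of_mem_roots hγ
    have hroot' : (p.map φ).IsRoot (φ γ) := by
      rw [IsRoot, Polynomial.eval_map, Polynomial.eval₂_at_apply]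
      rw [hroot.eq_zero, map_zero]
    obtain ⟨α, hαm, β, hβm, h⟩ := keyRoots (φ γ) hroot'
    refine ⟨α, hαm, β, hβm, φ.injective ?_⟩
    rw [h, map_mul]
end

section
/- Let A ∈ M_m(F) and B ∈ M_n(F) with minimal polynomials p_A and p_B. Then 1 is an eigenvalue of the operator C ↦ ACB on M_{m,n}(F) if and only if p_A and the adjoint polynomial p_B* are not relatively prime in F[X]. -/
open Polynomial

open Matrix in
lemma charRoot_mulVec {K : Type*} [Field K] {k : ℕ} (M : Matrix (Fin k) (Fin k) K) (μ : K)
    (h : Polynomial.eval μ M.charpoly = 0) :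
    (μ • (1 : Matrix (Fin k) (Fin k) K) - M).det = 0 := by
  have hmap : (Matrix.charmatrix M).map (evalRingHom μ)
      = μ • (1 : Matrix (Fin k) (Fin k) K) - M := by
    ext i j
    by_cases hij : i = j
    · subst hij
      simp [Matrix.charmatrix_apply_eq, Matrix.one_apply]
    · simp [Matrix.charmatrix_apply_ne _ _ _ hij, Matrix.one_apply, hij]
  rw [← hmap]
  have : M.charmatrix.map ⇑(evalRingHom μ) = (evalRingHom μ).mapMatrix M.charmatrix := rfl
  rw [this, ← RingHom.map_det]
  simpa [coe_evalRingHom, Matrix.charpoly] using h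

open Matrix in
lemma eig_mulVec {K : Type*} [Field K] {k : ℕ} (M : Matrix (Fin k) (Fin k) K) (μ : K)
    (h : Polynomial.eval μ M.charpoly = 0) :
    ∃ v, v ≠ 0 ∧ M *ᵥ v = μ • v := by
  obtain ⟨v, hv0, hv⟩ := Matrix.exists_mulVec_eq_zero_iff.mpr (charRoot_mulVec M μ h)
  refine ⟨v, hv0, ?_⟩
  rw [Matrix.sub_mulVec, Matrix.smul_mulVec, Matrix.one_mulVec, sub_eq_zero] at hv
  exact hv.symm

open Matrix in
lemma eig_vecMul {K : Type*} [Field K] {k : ℕ} (M : Matrix (Fin k) (Fin k) K) (μ : K)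
    (h : Polynomial.eval μ M.charpoly = 0) :
    ∃ w, w ≠ 0 ∧ w ᵥ* M = μ • w := by
  obtain ⟨w, hw0, hw⟩ := Matrix.exists_vecMul_eq_zero_iff.mpr (charRoot_mulVec M μ h)
  refine ⟨w, hw0, ?_⟩
  have hsm : w ᵥ* (μ • (1 : Matrix (Fin k) (Fin k) K)) = μ • w := by
    ext j
    simp [Matrix.vecMul, dotProduct, Matrix.one_apply, mul_ite, mul_comm]
  rw [Matrix.vecMul_sub, hsm, sub_eq_zero] at hw
  exact hw.symm

/-- The big matrix representing `C ↦ A C B - C`. -/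
def bigM {F : Type*} [Field F] {m n : ℕ}
    (A : Matrix (Fin m) (Fin m) F) (B : Matrix (Fin n) (Fin n) F) :
    Matrix (Fin m × Fin n) (Fin m × Fin n) F :=
  Matrix.of (fun p q => A p.1 q.1 * B q.2 p.2) - 1

open Matrix in
lemma bigM_mulVec {F : Type*} [Field F] {m n : ℕ}
    (A : Matrix (Fin m) (Fin m) F) (B : Matrix (Fin n) (Fin n) F)
    (x : Fin m × Fin n → F) (p : Fin m × Fin n) :
    ((bigM A B) *ᵥ x) p
      = (A * (Matrix.of fun k l => x (k, l)) * B) p.1 p.2 - x p := by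
  rw [bigM, Matrix.sub_mulVec, Matrix.one_mulVec, Pi.sub_apply]
  congr 1
  simp only [Matrix.mulVec, dotProduct, Matrix.mul_apply, Matrix.of_apply,
    Finset.sum_mul, Finset.mul_sum, Fintype.sum_prod_type]
  rw [Finset.sum_comm]
  exact Finset.sum_congr rfl fun l _ => Finset.sum_congr rfl fun k _ => by ring

open Matrix in
lemma exists_iff_det {F : Type*} [Field F] {m n : ℕ}
    (A : Matrix (Fin m) (Fin m) F) (B : Matrix (Fin n) (Fin n) F) :
    (∃ C : Matrix (Fin m) (Fin n) F, C ≠ 0 ∧ A * C * B = C) ↔ (bigM A B).det = 0 := by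
  rw [← Matrix.exists_mulVec_eq_zero_iff]
  constructor
  · rintro ⟨C, hC0, hC⟩
    refine ⟨fun p => C p.1 p.2, ?_, ?_⟩
    · intro h
      apply hC0
      ext i j
      exact congrFun h (i, j)
    · funext p
      rw [bigM_mulVec]
      have : (Matrix.of fun k l => C k l) = C := rfl
      rw [this, hC, sub_self, Pi.zero_apply]
  · rintro ⟨x, hx0, hx⟩
    refine ⟨Matrix.of fun k l => x (k, l), ?_, ?_⟩
    · intro h
      apply hx0
      funext p
      have := congrFun (congrFun h p.1) p.2
      simpa using this
    · ext i j
      have h1 := congrFun hx (i, j)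
      rw [bigM_mulVec, Pi.zero_apply, sub_eq_zero] at h1
      exact h1
lemma bigM_map {F K : Type*} [Field F] [Field K] (φ : F →+* K) {m n : ℕ}
    (A : Matrix (Fin m) (Fin m) F) (B : Matrix (Fin n) (Fin n) F) :
    bigM (A.map φ) (B.map φ) = (bigM A B).map φ := by
  ext p q
  by_cases h : p = q <;>
    simp [bigM, Matrix.one_apply, h, Matrix.map_apply, Matrix.sub_apply]

/-- `1` is an eigenvalue of the operator `C ↦ A C B` if and only if the minimal polynomial
of `A` and the adjoint (coefficient-reversed) minimal polynomial of `B` are not coprime. -/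
theorem stmt4 {F : Type*} [Field F] {m n : ℕ}
    (A : Matrix (Fin m) (Fin m) F) (B : Matrix (Fin n) (Fin n) F) :
    Module.End.HasEigenvalue (lrMul A B) 1 ↔
      ¬ IsCoprime (minpoly F A) ((minpoly F B).reverse) := by
  have hBint : IsIntegral F B := IsIntegral.of_finite F B
  have hAint : IsIntegral F A := IsIntegral.of_finite F A
  have hexists : Module.End.HasEigenvalue (lrMul A B) 1 ↔
      ∃ C : Matrix (Fin m) (Fin n) F, C ≠ 0 ∧ A * C * B = C := by
    rw [Module.End.hasEigenvalue_iff, Submodule.ne_bot_iff]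
    constructor
    · rintro ⟨C, hC, hC0⟩
      rw [Module.End.mem_eigenspace_iff] at hC
      exact ⟨C, hC0, by simpa [lrMul] using hC⟩
    · rintro ⟨C, hC0, hC⟩
      exact ⟨C, Module.End.mem_eigenspace_iff.mpr (by simpa [lrMul] using hC), hC0⟩
  rw [hexists]
  constructor
  · -- eigenvector exists → not coprime
    rintro ⟨C, hC0, hC⟩ hcop
    set q := minpoly F B with hq
    set d := q.natDegree with hd
    have key : ∀ k : ℕ, A ^ k * C * B ^ k = C := by
      intro k
      induction k with
      | zero => simp
      | succ k ih =>
        have hstep : A ^ (k + 1) * C * B ^ (k + 1) = A * (A ^ k * C * B ^ k) * B := by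
          rw [pow_succ' A, pow_succ B]
          simp only [Matrix.mul_assoc]
        rw [hstep, ih, hC]
    have hmain : (aeval A q.reverse) * (C * B ^ d) = 0 := by
      rw [aeval_eq_sum_range' (lt_of_le_of_lt q.reverse_natDegree_le (Nat.lt_succ_self d)),
        Matrix.sum_mul]
      have hterm : ∀ i ∈ Finset.range (d + 1),
          (q.reverse.coeff i • A ^ i) * (C * B ^ d) = q.coeff (d - i) • (C * B ^ (d - i)) := by
        intro i hi
        rw [Finset.mem_range, Nat.lt_succ_iff] at hi
        rw [coeff_reverse, revAt_le hi, Matrix.smul_mul]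
        congr 1
        have hsplit : B ^ d = B ^ i * B ^ (d - i) := by
          rw [← pow_add, Nat.add_sub_cancel' hi]
        rw [hsplit]
        simp only [← Matrix.mul_assoc]
        rw [key i]
      rw [Finset.sum_congr rfl hterm]
      have hrefl := Finset.sum_range_reflect (fun j => q.coeff j • (C * B ^ j)) (d + 1)
      simp only [Nat.add_sub_cancel] at hrefl
      rw [hrefl]
      simp only [← Matrix.mul_smul]
      rw [← Matrix.mul_sum, ← aeval_eq_sum_range' (Nat.lt_succ_self d), hq, minpoly.aeval,
        Matrix.mul_zero]
    obtain ⟨u, v, huv⟩ := hcop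
    have h1 : aeval A v * aeval A q.reverse = 1 := by
      have := congrArg (aeval A) huv
      simpa [minpoly.aeval] using this
    have h2 : C * B ^ d = 0 := by
      calc C * B ^ d = (aeval A v * aeval A q.reverse) * (C * B ^ d) := by
            rw [h1, Matrix.one_mul]
        _ = aeval A v * ((aeval A q.reverse) * (C * B ^ d)) := by rw [Matrix.mul_assoc]
        _ = 0 := by rw [hmain, Matrix.mul_zero]
    apply hC0
    calc C = A ^ d * C * B ^ d := (key d).symm
      _ = A ^ d * (C * B ^ d) := by rw [Matrix.mul_assoc]
      _ = 0 := by rw [h2, Matrix.mul_zero]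
  · -- not coprime → eigenvector exists
    intro hncop
    classical
    set K := AlgebraicClosure F
    set φ := algebraMap F K with hφ
    set p := minpoly F A with hp
    set q := (minpoly F B).reverse with hq
    set g := EuclideanDomain.gcd p q with hg
    have hgu : ¬IsUnit g := fun h => hncop (EuclideanDomain.gcd_isUnit_iff.mp h)
    have hp0 : p ≠ 0 := minpoly.ne_zero hAint
    have hg0 : g ≠ 0 := fun h => hp0 (EuclideanDomain.gcd_eq_zero_iff.mp h).1
    have hgdeg : (g.map φ).degree ≠ 0 := by
      rw [Polynomial.degree_map_eq_of_injective φ.injective]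
      intro h
      exact hgu (Polynomial.isUnit_iff_degree_eq_zero.mpr h)
    obtain ⟨lam, hlam⟩ := IsAlgClosed.exists_root (g.map φ) hgdeg
    have hlam' : Polynomial.eval lam (g.map φ) = 0 := hlam
    have hroot : ∀ r : F[X], g ∣ r → Polynomial.eval lam (r.map φ) = 0 := by
      intro r hr
      obtain ⟨c, rfl⟩ := hr
      rw [Polynomial.map_mul, eval_mul, hlam', zero_mul]
    have hlp : Polynomial.eval lam (p.map φ) = 0 := hroot p (EuclideanDomain.gcd_dvd_left p q)
    have hlq : Polynomial.eval lam (q.map φ) = 0 := hroot q (EuclideanDomain.gcd_dvd_right p q)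
    have hl0 : lam ≠ 0 := by
      intro h
      rw [h, ← coeff_zero_eq_eval_zero, coeff_map, hq, coeff_zero_reverse,
        (minpoly.monic hBint).leadingCoeff, map_one] at hlq
      exact one_ne_zero hlq
    -- eigenvalue of A'
    have hchA : Polynomial.eval lam (A.map φ).charpoly = 0 := by
      rw [Matrix.charpoly_map]
      obtain ⟨c, hc⟩ := Matrix.minpoly_dvd_charpoly A
      rw [hc, Polynomial.map_mul, eval_mul, ← hp, hlp, zero_mul]
    obtain ⟨v, hv0, hAv⟩ := eig_mulVec (A.map φ) lam hchA
    -- eigenvalue lam⁻¹ of B'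
    haveI : Invertible (lam⁻¹) := invertibleOfNonzero (inv_ne_zero hl0)
    have hinv : (⅟(lam⁻¹) : K) = lam := by
      rw [invOf_eq_inv, inv_inv]
    have hlinvB : Polynomial.eval lam⁻¹ ((minpoly F B).map φ) = 0 := by
      have hiff := Polynomial.eval₂_reverse_eq_zero_iff φ lam⁻¹ (minpoly F B)
      rw [hinv] at hiff
      rw [eval_map]
      apply hiff.mp
      rw [← eval_map]
      rw [hq] at hlq
      exact hlq
    have hchB : Polynomial.eval lam⁻¹ (B.map φ).charpoly = 0 := by
      rw [Matrix.charpoly_map]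
      obtain ⟨c, hc⟩ := Matrix.minpoly_dvd_charpoly B
      rw [hc, Polynomial.map_mul, eval_mul, hlinvB, zero_mul]
    obtain ⟨w, hw0, hwB⟩ := eig_vecMul (B.map φ) lam⁻¹ hchB
    -- construct eigenmatrix over K
    have hCK : ∃ C' : Matrix (Fin m) (Fin n) K, C' ≠ 0 ∧ (A.map φ) * C' * (B.map φ) = C' := by
      refine ⟨Matrix.vecMulVec v w, ?_, ?_⟩
      · obtain ⟨i, hi⟩ := Function.ne_iff.mp hv0
        obtain ⟨j, hj⟩ := Function.ne_iff.mp hw0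
        intro h
        have := congrFun (congrFun h i) j
        rw [Matrix.vecMulVec_apply] at this
        exact (mul_ne_zero hi hj) this
      · have h1 : (A.map φ) * Matrix.vecMulVec v w
            = Matrix.vecMulVec ((A.map φ).mulVec v) w := by
          ext i j
          simp [Matrix.mul_apply, Matrix.vecMulVec_apply, Matrix.mulVec, dotProduct,
            Finset.sum_mul, mul_assoc]
        have h2 : Matrix.vecMulVec ((A.map φ).mulVec v) w * (B.map φ)
            = Matrix.vecMulVec ((A.map φ).mulVec v) (Matrix.vecMul w (B.map φ)) := by
          ext i j
          simp only [Matrix.mul_apply, Matrix.vecMulVec_apply, Matrix.vecMul,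
            dotProduct, Finset.mul_sum]
          exact Finset.sum_congr rfl fun l _ => by ring
        rw [h1, h2, hAv, hwB]
        ext i j
        simp only [Matrix.vecMulVec_apply, Pi.smul_apply, smul_eq_mul]
        linear_combination (v i * w j) * mul_inv_cancel₀ hl0
    obtain ⟨C', hC'0, hC'⟩ := hCK
    have hdetK : (bigM (A.map φ) (B.map φ)).det = 0 := (exists_iff_det _ _).mp ⟨C', hC'0, hC'⟩
    have hdetF : (bigM A B).det = 0 := by
      rw [bigM_map φ] at hdetK
      have hmm : (bigM A B).map ⇑φ = φ.mapMatrix (bigM A B) := rfl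
      rw [hmm, ← RingHom.map_det] at hdetK
      exact φ.injective (by simpa using hdetK)
    exact (exists_iff_det A B).mpr hdetF
end

section
/- Let A ∈ gl(n,F) with minimal polynomial p_A satisfying gcd(p_A, p_A*) = 1, and let T be the 2n×2n block matrix with blocks [[0, A],[I_n, 0]]. Then the Lie algebra L(T) = {X ∈ gl(2n,F) : XᵀT + TX = 0} is isomorphic to the centralizer of A in gl(n,F); explicitly, L(T) consists of the block-diagonal matrices diag(−Yᵀ, Y) with Y ∈ gl(n,F) commuting with A. -/
open Polynomial Matrix

attribute [local instance] LieRing.ofAssociativeRing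
attribute [local instance] LieAlgebra.ofAssociativeAlgebra

variable {F : Type*} [Field F]

/-- The Lie algebra `L(S)` of all matrices `X` with `Xᵀ S + S X = 0`. -/
def lieAlgOfForm {k : Type*} [Fintype k] [DecidableEq k] (S : Matrix k k F) :
    LieSubalgebra F (Matrix k k F) where
  carrier := {X | Xᵀ * S + S * X = 0}
  add_mem' := by
    intro X Y hX hY
    simp only [Set.mem_setOf_eq] at *
    rw [transpose_add, add_mul, mul_add, add_add_add_comm, hX, hY, add_zero]
  zero_mem' := by simp
  smul_mem' := by
    intro c X hX
    simp only [Set.mem_setOf_eq] at *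
    rw [transpose_smul, smul_mul_assoc, mul_smul_comm, ← smul_add, hX, smul_zero]
  lie_mem' := by
    intro X Y hX hY
    simp only [Set.mem_setOf_eq] at *
    have hX' : Xᵀ * S = -(S * X) := eq_neg_of_add_eq_zero_left hX
    have hY' : Yᵀ * S = -(S * Y) := eq_neg_of_add_eq_zero_left hY
    show ⁅X, Y⁆ᵀ * S + S * ⁅X, Y⁆ = 0
    rw [Ring.lie_def]
    calc (X * Y - Y * X)ᵀ * S + S * (X * Y - Y * X)
        = Yᵀ * (Xᵀ * S) - Xᵀ * (Yᵀ * S) + S * (X * Y - Y * X) := by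
          rw [transpose_sub, transpose_mul, transpose_mul]; noncomm_ring
      _ = Yᵀ * (-(S * X)) - Xᵀ * (-(S * Y)) + S * (X * Y - Y * X) := by rw [hX', hY']
      _ = -((Yᵀ * S) * X) + (Xᵀ * S) * Y + S * (X * Y - Y * X) := by noncomm_ring
      _ = -((-(S * Y)) * X) + (-(S * X)) * Y + S * (X * Y - Y * X) := by rw [hX', hY']
      _ = 0 := by noncomm_ring

/-- The centralizer of a matrix `A` in `gl(n, F)`, as a Lie subalgebra. -/
def matCentralizer {k : Type*} [Fintype k] [DecidableEq k] (A : Matrix k k F) :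
    LieSubalgebra F (Matrix k k F) where
  carrier := {Y | Y * A = A * Y}
  add_mem' := by
    intro X Y hX hY
    simp only [Set.mem_setOf_eq] at *
    rw [add_mul, mul_add, hX, hY]
  zero_mem' := by simp
  smul_mem' := by
    intro c X hX
    simp only [Set.mem_setOf_eq] at *
    rw [smul_mul_assoc, mul_smul_comm, hX]
  lie_mem' := by
    intro X Y hX hY
    simp only [Set.mem_setOf_eq] at *
    show ⁅X, Y⁆ * A = A * ⁅X, Y⁆
    rw [Ring.lie_def]
    calc (X * Y - Y * X) * A = X * (Y * A) - Y * (X * A) := by noncomm_ring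
      _ = X * (A * Y) - Y * (A * X) := by rw [hY, hX]
      _ = (X * A) * Y - (Y * A) * X := by noncomm_ring
      _ = (A * X) * Y - (A * Y) * X := by rw [hX, hY]
      _ = A * (X * Y - Y * X) := by noncomm_ring

section Aux
variable {F : Type*} [Field F] {n : ℕ}

lemma aeval_matrix_transpose (A : Matrix (Fin n) (Fin n) F) (p : F[X]) :
    aeval Aᵀ p = (aeval A p)ᵀ := by
  rw [aeval_eq_sum_range (p := p) Aᵀ, aeval_eq_sum_range (p := p) A, Matrix.transpose_sum]
  exact Finset.sum_congr rfl fun i _ => by rw [transpose_smul, transpose_pow]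

lemma key₀ (M N R : Matrix (Fin n) (Fin n) F) (h : ∀ i, M ^ i * R * N ^ i = R) (p : F[X]) :
    R * aeval N p.reverse = aeval M p * (R * N ^ p.natDegree) := by
  set d := p.natDegree with hd
  rw [aeval_eq_sum_range' (n := d + 1)
        (lt_of_le_of_lt p.reverse_natDegree_le (Nat.lt_succ_self d)) N,
      aeval_eq_sum_range (p := p) M, Finset.mul_sum, Finset.sum_mul]
  rw [← Finset.sum_range_reflect (fun i => p.coeff i • M ^ i * (R * N ^ d)) (d + 1)]
  refine Finset.sum_congr rfl fun i hi => ?_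
  rw [Finset.mem_range] at hi
  have hi' : i ≤ d := Nat.lt_succ_iff.mp hi
  have h1 : p.reverse.coeff i = p.coeff (d - i) := by
    rw [coeff_reverse, revAt_le hi']
  have h2 : R * N ^ i = M ^ (d - i) * (R * N ^ d) := by
    conv_lhs => rw [← h (d - i)]
    rw [mul_assoc, mul_assoc, ← pow_add, Nat.sub_add_cancel hi']
  rw [h1, mul_smul_comm, h2, Nat.succ_sub_one, smul_mul_assoc]

lemma cancel (N X : Matrix (Fin n) (Fin n) F) {p : F[X]}
    (hcop : IsCoprime p p.reverse)
    (hp : aeval N p = 0) (hrev : X * aeval N p.reverse = 0) : X = 0 := by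
  obtain ⟨a, b, hab⟩ := hcop
  have h : X * aeval N (a * p + b * p.reverse) = X := by rw [hab, _root_.map_one, mul_one]
  rw [map_add, _root_.map_mul, hp, mul_zero, zero_add, mul_comm b, _root_.map_mul, ← mul_assoc, hrev,
    zero_mul] at h
  exact h.symm

lemma mem_char (A : Matrix (Fin n) (Fin n) F)
    (hcop : IsCoprime (minpoly F A) ((minpoly F A).reverse))
    (X : Matrix (Fin n ⊕ Fin n) (Fin n ⊕ Fin n) F) :
    (Xᵀ * Matrix.fromBlocks 0 A 1 0 + Matrix.fromBlocks 0 A 1 0 * X = 0) ↔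
      ∃ Y : Matrix (Fin n) (Fin n) F, Y * A = A * Y ∧ X = Matrix.fromBlocks (-Yᵀ) 0 0 Y := by
  constructor
  · intro hX
    set P := X.toBlocks₁₁ with hP'
    set Q := X.toBlocks₁₂ with hQ'
    set R := X.toBlocks₂₁ with hR'
    set S := X.toBlocks₂₂ with hS'
    have hXb : X = fromBlocks P Q R S := (fromBlocks_toBlocks X).symm
    rw [hXb, fromBlocks_transpose, fromBlocks_multiply, fromBlocks_multiply, fromBlocks_add,
      ← fromBlocks_zero, fromBlocks_inj] at hX
    obtain ⟨e11, e12, e21, e22⟩ := hX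
    simp only [mul_zero, mul_one, zero_mul, one_mul, zero_add, add_zero] at e11 e12 e21 e22
    -- P = -Sᵀ
    have hP : P = -Sᵀ := by
      have := eq_neg_of_add_eq_zero_right e21
      rw [this]
    -- S commutes with A
    have hS : S * A = A * S := by
      have hPT : Pᵀ = -S := by rw [hP, transpose_neg, transpose_transpose]
      rw [hPT, neg_mul] at e12
      have h5 := eq_neg_of_add_eq_zero_right e12
      rw [neg_neg] at h5
      exact h5.symm
    -- R = 0
    have hRstep : A * R * Aᵀ = R := by
      have h1 : Rᵀ = -(A * R) := eq_neg_of_add_eq_zero_left e11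
      have h2 := congrArg Matrix.transpose e11
      rw [transpose_add, transpose_transpose, transpose_mul, transpose_zero] at h2
      have hr : R = -(Rᵀ * Aᵀ) := eq_neg_of_add_eq_zero_left h2
      conv_rhs => rw [hr, h1]
      rw [neg_mul, neg_neg]
    have hRi : ∀ i, A ^ i * R * Aᵀ ^ i = R := by
      intro i
      induction i with
      | zero => simp
      | succ i ih =>
        have h4 : A ^ (i + 1) * R * Aᵀ ^ (i + 1) = A ^ i * (A * R * Aᵀ) * Aᵀ ^ i := by
          rw [pow_succ, pow_succ']; noncomm_ring
        rw [h4, hRstep, ih]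
    have hpT : aeval Aᵀ (minpoly F A) = 0 := by
      rw [aeval_matrix_transpose, minpoly.aeval, transpose_zero]
    have hR0 : R = 0 := by
      refine cancel Aᵀ R hcop hpT ?_
      rw [key₀ A Aᵀ R hRi (minpoly F A), minpoly.aeval, zero_mul]
    -- Q = 0
    have hQstep : Aᵀ * Q * A = Q := by
      have h1 : Q = -(Qᵀ * A) := eq_neg_of_add_eq_zero_right e22
      have h2 := congrArg Matrix.transpose e22
      rw [transpose_add, transpose_mul, transpose_transpose, transpose_zero] at h2
      have h3 : Qᵀ = -(Aᵀ * Q) := eq_neg_of_add_eq_zero_right h2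
      conv_rhs => rw [h1, h3]
      rw [neg_mul, neg_neg]
    have hQi : ∀ i, Aᵀ ^ i * Q * A ^ i = Q := by
      intro i
      induction i with
      | zero => simp
      | succ i ih =>
        have h4 : Aᵀ ^ (i + 1) * Q * A ^ (i + 1) = Aᵀ ^ i * (Aᵀ * Q * A) * A ^ i := by
          rw [pow_succ, pow_succ']; noncomm_ring
        rw [h4, hQstep, ih]
    have hQ0 : Q = 0 := by
      refine cancel A Q hcop (minpoly.aeval F A) ?_
      rw [key₀ Aᵀ A Q hQi (minpoly F A), hpT, zero_mul]
    exact ⟨S, hS, by rw [hXb, hR0, hQ0, hP]⟩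
  · rintro ⟨Y, hY, rfl⟩
    rw [fromBlocks_transpose, fromBlocks_multiply, fromBlocks_multiply, fromBlocks_add,
      ← fromBlocks_zero, fromBlocks_inj]
    refine ⟨?_, ?_, ?_, ?_⟩ <;> simp [hY]

end Aux

/-- If `gcd(p_A, p_A*) = 1` and `T = [[0, A], [I, 0]]`, then `L(T)` is isomorphic to the
centralizer of `A` in `gl(n, F)`; explicitly, `L(T)` consists of the matrices
`diag(-Yᵀ, Y)` with `Y` commuting with `A`. -/
theorem stmt5 {n : ℕ} (A : Matrix (Fin n) (Fin n) F)
    (hcop : IsCoprime (minpoly F A) ((minpoly F A).reverse)) :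
    (∀ X : Matrix (Fin n ⊕ Fin n) (Fin n ⊕ Fin n) F,
        X ∈ lieAlgOfForm (Matrix.fromBlocks 0 A 1 0) ↔
          ∃ Y : Matrix (Fin n) (Fin n) F, Y * A = A * Y ∧
            X = Matrix.fromBlocks (-Yᵀ) 0 0 Y) ∧
      Nonempty ((lieAlgOfForm (Matrix.fromBlocks 0 A 1 0 :
          Matrix (Fin n ⊕ Fin n) (Fin n ⊕ Fin n) F)) ≃ₗ⁅F⁆ matCentralizer A) := by
  have hchar : ∀ X : Matrix (Fin n ⊕ Fin n) (Fin n ⊕ Fin n) F,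
      X ∈ lieAlgOfForm (Matrix.fromBlocks 0 A 1 0) ↔
        ∃ Y : Matrix (Fin n) (Fin n) F, Y * A = A * Y ∧
          X = Matrix.fromBlocks (-Yᵀ) 0 0 Y :=
    fun X => Iff.trans Iff.rfl (mem_char A hcop X)
  have hform : ∀ x : lieAlgOfForm (Matrix.fromBlocks 0 A 1 0 :
      Matrix (Fin n ⊕ Fin n) (Fin n ⊕ Fin n) F),
      (x : Matrix (Fin n ⊕ Fin n) (Fin n ⊕ Fin n) F).toBlocks₂₂ * A =
          A * (x : Matrix (Fin n ⊕ Fin n) (Fin n ⊕ Fin n) F).toBlocks₂₂ ∧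
        (x : Matrix (Fin n ⊕ Fin n) (Fin n ⊕ Fin n) F) =
          Matrix.fromBlocks (-((x : Matrix (Fin n ⊕ Fin n) (Fin n ⊕ Fin n) F).toBlocks₂₂)ᵀ) 0 0
            ((x : Matrix (Fin n ⊕ Fin n) (Fin n ⊕ Fin n) F).toBlocks₂₂) := by
    intro x
    obtain ⟨Y, hY, hXY⟩ := (hchar x.1).1 x.2
    have hB : (x : Matrix (Fin n ⊕ Fin n) (Fin n ⊕ Fin n) F).toBlocks₂₂ = Y := by
      rw [hXY, toBlocks_fromBlocks₂₂]
    rw [hB]; exact ⟨hY, hXY⟩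
  refine ⟨hchar, ⟨{
    toFun := fun x => ⟨(x : Matrix (Fin n ⊕ Fin n) (Fin n ⊕ Fin n) F).toBlocks₂₂, (hform x).1⟩
    map_add' := fun x y => Subtype.ext rfl
    map_smul' := fun c x => Subtype.ext rfl
    map_lie' := @fun x y => Subtype.ext ?_
    invFun := fun y => ⟨Matrix.fromBlocks (-(y : Matrix (Fin n) (Fin n) F)ᵀ) 0 0
        (y : Matrix (Fin n) (Fin n) F), (hchar _).2 ⟨y.1, y.2, rfl⟩⟩
    left_inv := fun x => Subtype.ext (hform x).2.symm
    right_inv := fun y => Subtype.ext (by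
      show (Matrix.fromBlocks (-((y : Matrix (Fin n) (Fin n) F))ᵀ) 0 0
          (y : Matrix (Fin n) (Fin n) F)).toBlocks₂₂ = (y : Matrix (Fin n) (Fin n) F)
      rw [toBlocks_fromBlocks₂₂]) }⟩⟩
  obtain ⟨hx, hxe⟩ := hform x
  obtain ⟨hy, hye⟩ := hform y
  show (⁅(x : Matrix (Fin n ⊕ Fin n) (Fin n ⊕ Fin n) F),
      (y : Matrix (Fin n ⊕ Fin n) (Fin n ⊕ Fin n) F)⁆).toBlocks₂₂ =
    ⁅(x : Matrix (Fin n ⊕ Fin n) (Fin n ⊕ Fin n) F).toBlocks₂₂,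
      (y : Matrix (Fin n ⊕ Fin n) (Fin n ⊕ Fin n) F).toBlocks₂₂⁆
  rw [Ring.lie_def, Ring.lie_def]
  conv_lhs => rw [hxe, hye]
  simp [fromBlocks_multiply, sub_eq_add_neg, fromBlocks_neg, fromBlocks_add,
    toBlocks_fromBlocks₂₂]
end

section
/- Suppose the Lie algebra L(f) of skew-adjoint endomorphisms of a bilinear form f on a nonzero finite-dimensional vector space V is reductive (every solvable ideal is central) and the radical of f is nonzero. Then f = 0. -/
/-- A Lie algebra is reductive if every solvable ideal is contained in its center. -/
def IsReductiveLie (R L : Type*) [CommRing R] [LieRing L] [LieAlgebra R L] : Prop :=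
  ∀ I : LieIdeal R L, LieAlgebra.IsSolvable I → I ≤ LieAlgebra.center R L

/-- If `L(f)` is reductive and the radical of `f` is nonzero, then `f = 0`. -/
theorem stmt7 {F V : Type*} [Field F] [AddCommGroup V] [Module F V]
    [FiniteDimensional F V] [Nontrivial V] (f : LinearMap.BilinForm F V)
    (hred : IsReductiveLie F (skewAdjointLieSubalgebra f))
    (hrad : ∃ u : V, u ≠ 0 ∧ (∀ v : V, f u v = 0) ∧ (∀ v : V, f v u = 0)) :
    f = 0 := by
  classical
  set L := skewAdjointLieSubalgebra f with hL
  -- the radical of f as a submodule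
  let Rad : Submodule F V :=
    { carrier := {r | (∀ v, f r v = 0) ∧ (∀ v, f v r = 0)}
      add_mem' := by
        rintro r s ⟨hr1, hr2⟩ ⟨hs1, hs2⟩
        exact ⟨fun v => by simp [hr1 v, hs1 v], fun v => by simp [hr2 v, hs2 v]⟩
      zero_mem' := ⟨fun v => by simp, fun v => by simp⟩
      smul_mem' := by
        rintro c r ⟨hr1, hr2⟩
        exact ⟨fun v => by simp [hr1 v], fun v => by simp [hr2 v]⟩ }
  -- skew-adjoint maps preserve the radical
  have hpres : ∀ (y : L) (r : V), r ∈ Rad → (y : Module.End F V) r ∈ Rad := by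
    rintro ⟨y, hy⟩ r ⟨hr1, hr2⟩
    have hy0 : ∀ p q, f (y p) q = f p ((-y) q) :=
      (LinearMap.mem_skewAdjointSubmodule (B := f) y).mp hy
    have hy' : ∀ p q, f (y p) q = -(f p (y q)) := by
      intro p q
      have := hy0 p q
      simpa using this
    constructor
    · intro v
      rw [hy' r v, hr1 (y v), neg_zero]
    · intro v
      show f v (y r) = 0
      have h := hy' v r
      have h2 : f (y v) r = 0 := hr2 (y v)
      rw [h2] at h
      exact neg_eq_zero.mp h.symm
  -- the ideal of skew maps with range in Rad which kill Rad
  let Icar : Submodule F L :=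
    { carrier := {x | (∀ v, (x : Module.End F V) v ∈ Rad) ∧
        (∀ r ∈ Rad, (x : Module.End F V) r = 0)}
      add_mem' := by
        rintro x y ⟨hx1, hx2⟩ ⟨hy1, hy2⟩
        constructor
        · intro v
          have : ((x + y : L) : Module.End F V) v
              = (x : Module.End F V) v + (y : Module.End F V) v := rfl
          rw [this]
          exact Rad.add_mem (hx1 v) (hy1 v)
        · intro r hr
          have : ((x + y : L) : Module.End F V) r
              = (x : Module.End F V) r + (y : Module.End F V) r := rfl
          rw [this, hx2 r hr, hy2 r hr, add_zero]
      zero_mem' := ⟨fun v => by simp [Rad.zero_mem], fun r _ => by simp⟩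
      smul_mem' := by
        rintro c x ⟨hx1, hx2⟩
        constructor
        · intro v
          have : ((c • x : L) : Module.End F V) v = c • (x : Module.End F V) v := rfl
          rw [this]
          exact Rad.smul_mem c (hx1 v)
        · intro r hr
          have : ((c • x : L) : Module.End F V) r = c • (x : Module.End F V) r := rfl
          rw [this, hx2 r hr, smul_zero] }
  let I : LieIdeal F L :=
    { Icar with
      lie_mem := by
        rintro y x ⟨hx1, hx2⟩
        constructor
        · intro v
          have hb : ((⁅y, x⁆ : L) : Module.End F V) v
              = (y : Module.End F V) ((x : Module.End F V) v)
                - (x : Module.End F V) ((y : Module.End F V) v) := by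
            change (⁅(y : Module.End F V), (x : Module.End F V)⁆ : Module.End F V) v = _
            rw [Ring.lie_def]
            rfl
          rw [hb]
          exact Rad.sub_mem (hpres y _ (hx1 v)) (hx1 _)
        · intro r hr
          have hb : ((⁅y, x⁆ : L) : Module.End F V) r
              = (y : Module.End F V) ((x : Module.End F V) r)
                - (x : Module.End F V) ((y : Module.End F V) r) := by
            change (⁅(y : Module.End F V), (x : Module.End F V)⁆ : Module.End F V) r = _
            rw [Ring.lie_def]
            rfl
          rw [hb, hx2 r hr, map_zero, hx2 _ (hpres y r hr), sub_zero] }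
  -- I is abelian, hence solvable
  have habI : IsLieAbelian I := by
    constructor
    intro a b
    have : (⁅a, b⁆ : I) = 0 := by
      apply Subtype.ext
      apply Subtype.ext
      have hb : ((⁅(a : L), (b : L)⁆ : L) : Module.End F V)
          = ⁅((a : L) : Module.End F V), ((b : L) : Module.End F V)⁆ := rfl
      show ((⁅(a : L), (b : L)⁆ : L) : Module.End F V) = 0
      rw [hb, Ring.lie_def]
      ext v
      have ha2 := a.2.2
      have hb1 := b.2.1
      have hb2 := b.2.2
      have ha1 := a.2.1
      simp only [LinearMap.sub_apply, Module.End.mul_apply, LinearMap.zero_apply]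
      rw [ha2 _ (hb1 v), hb2 _ (ha1 v), sub_zero]
    exact this
  have hsolv : LieAlgebra.IsSolvable I := inferInstance
  have hIc : I ≤ LieAlgebra.center F L := hred I hsolv
  -- now prove f = 0
  obtain ⟨u, hu0, hu1, hu2⟩ := hrad
  have huRad : u ∈ Rad := ⟨hu1, hu2⟩
  obtain ⟨ψ, hψ⟩ : ∃ ψ : Module.Dual F V, ψ u ≠ 0 := by
    by_contra h
    push_neg at h
    exact hu0 ((Module.forall_dual_apply_eq_zero_iff F u).mp h)
  ext a b
  simp only [LinearMap.zero_apply]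
  -- the element x : v ↦ f a v • u
  have hmemL : ∀ φ : Module.Dual F V, φ.smulRight u ∈ L := by
    intro φ
    show φ.smulRight u ∈ f.skewAdjointSubmodule
    rw [LinearMap.mem_skewAdjointSubmodule]
    intro v w
    simp [LinearMap.smulRight_apply, hu1, hu2]
  let xL : L := ⟨(f a).smulRight u, hmemL (f a)⟩
  let yL : L := ⟨ψ.smulRight u, hmemL ψ⟩
  have hxI : xL ∈ I := by
    constructor
    · intro v
      exact Rad.smul_mem _ huRad
    · rintro r ⟨hr1, hr2⟩
      show f a r • u = 0
      rw [hr2 a, zero_smul]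
  have hxc : xL ∈ LieAlgebra.center F L := hIc hxI
  have hzero : ⁅yL, xL⁆ = (0 : L) :=
    (LieModule.mem_maxTrivSubmodule F L L xL).mp hxc yL
  have happ : ((⁅yL, xL⁆ : L) : Module.End F V) b = 0 := by
    rw [hzero]; rfl
  have hb : ((⁅yL, xL⁆ : L) : Module.End F V) b
      = (yL : Module.End F V) ((xL : Module.End F V) b)
        - (xL : Module.End F V) ((yL : Module.End F V) b) := by
    change (⁅(yL : Module.End F V), (xL : Module.End F V)⁆ : Module.End F V) b = _
    rw [Ring.lie_def]
    rfl
  rw [hb] at happ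
  have hcomp : (yL : Module.End F V) ((xL : Module.End F V) b)
      - (xL : Module.End F V) ((yL : Module.End F V) b)
      = (f a b * ψ u) • u := by
    show ψ.smulRight u ((f a).smulRight u b) - (f a).smulRight u (ψ.smulRight u b)
        = (f a b * ψ u) • u
    simp only [LinearMap.smulRight_apply, map_smul, smul_eq_mul]
    rw [hu2 a]
    simp only [zero_mul, zero_smul, smul_zero, sub_zero, mul_smul]
    try exact smul_comm _ _ _
  rw [hcomp] at happ
  rcases smul_eq_zero.mp happ with h | h
  · rcases mul_eq_zero.mp h with h1 | h1
    · exact h1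
    · exact absurd h1 hψ
  · exact absurd h hu0
end

section
/- Let f be a non-degenerate bilinear form on V with asymmetry σ. Then σ − σ^{-1} belongs to L(f), the Lie algebra of f-skew-adjoint endomorphisms; moreover σ − σ^{-1} lies in the center of L(f). -/
/-- If `σ` is the asymmetry of a non-degenerate bilinear form `f`, then `σ − σ⁻¹` is
`f`-skew-adjoint and lies in the center of `L(f)`. -/
theorem stmt12 {F V : Type*} [Field F] [AddCommGroup V] [Module F V]
    [FiniteDimensional F V] (f : LinearMap.BilinForm F V)
    (hf : f.Nondegenerate) (σ : V ≃ₗ[F] V)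
    (hσ : ∀ v w : V, f w v = f v (σ w)) :
    ((σ : Module.End F V) - (σ.symm : Module.End F V)) ∈ skewAdjointLieSubalgebra f ∧
      ∀ x : Module.End F V, x ∈ skewAdjointLieSubalgebra f →
        ((σ : Module.End F V) - (σ.symm : Module.End F V)) * x
          = x * ((σ : Module.End F V) - (σ.symm : Module.End F V)) := by
  -- σ preserves f
  have hpres : ∀ v w : V, f (σ v) (σ w) = f v w := by
    intro v w
    rw [← hσ (σ v) w, ← hσ w v]
  -- f (σ v) w = f v (σ.symm w)
  have hleft : ∀ v w : V, f (σ v) w = f v (σ.symm w) := by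
    intro v w
    simpa using hpres v (σ.symm w)
  have hleft' : ∀ v w : V, f (σ.symm v) w = f v (σ w) := by
    intro v w
    have := hpres (σ.symm v) w
    simpa using this.symm
  have hmem : ((σ : Module.End F V) - (σ.symm : Module.End F V)) ∈
      skewAdjointLieSubalgebra f := by
    have h : LinearMap.IsSkewAdjoint f ((σ : Module.End F V) - (σ.symm : Module.End F V)) := by
      intro v w
      simp only [LinearMap.sub_apply, LinearMap.neg_apply, LinearEquiv.coe_coe, Pi.sub_apply, Pi.neg_apply, map_sub, map_neg]
      rw [hleft, hleft']
      ring
    exact (LinearMap.mem_skewAdjointSubmodule (B := f) _).mpr h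
  refine ⟨hmem, ?_⟩
  intro x hx
  have hx' : ∀ v w : V, f (x v) w = - f v (x w) := by
    have h : LinearMap.IsSkewAdjoint f x :=
      (LinearMap.mem_skewAdjointSubmodule (B := f) x).mp hx
    intro v w
    simpa using h v w
  -- σ commutes with x
  have hcomm : (σ : Module.End F V) * x = x * (σ : Module.End F V) := by
    apply LinearMap.ext
    intro w
    show σ (x w) = x (σ w)
    rw [← sub_eq_zero]
    apply hf.1
    intro n
    have key : ∀ v : V, f v (σ (x w)) = f v (x (σ w)) := by
      intro v
      have e1 := hσ v (x w)
      have e2 := hx' w v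
      have e3 := hx' v (σ w)
      have e4 := hσ (x v) w
      linear_combination (-1 : F) * e1 + e2 - e4 - e3
    have hz : ∀ v : V, f v ((σ (x w)) - (x (σ w))) = 0 := by
      intro v; rw [map_sub, key]; ring
    have h5 := hz (σ.symm n)
    rw [hσ ((σ (x w)) - (x (σ w))) (σ.symm n)] at h5
    simpa using h5
  have hcomm' : (σ.symm : Module.End F V) * x = x * (σ.symm : Module.End F V) := by
    apply LinearMap.ext
    intro v
    have h := LinearMap.congr_fun hcomm (σ.symm v)
    simp only [Module.End.mul_apply, LinearEquiv.coe_coe] at h ⊢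
    rw [LinearEquiv.apply_symm_apply] at h
    rw [← h, LinearEquiv.symm_apply_apply]
  rw [sub_mul, mul_sub, hcomm, hcomm']
end

section
/- Let f be a non-degenerate bilinear form on V with asymmetry σ and minimal polynomial p_σ of σ. Then σ is similar to σ^{-1}; consequently the adjoint polynomial p_σ* equals ±p_σ, and every monic irreducible factor p of p_σ satisfies either gcd(p, p*) = 1 or p* = ±p. -/
open Polynomial

universe u v

open DirectSum

theorem dsum_lemma {F : Type*} [Field F] {ι : Type*} [Fintype ι] [DecidableEq ι]
    (W : ι → Type*) [∀ i, AddCommGroup (W i)] [∀ i, Module F[X] (W i)] [∀ i, Module F (W i)]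
    [∀ i, IsScalarTower F F[X] (W i)]
    (b : ∀ i, W i →ₗ[F] W i →ₗ[F] F)
    (hnd : ∀ i x, (∀ y, b i x y = 0) → x = 0)
    (hc : ∀ i (r : F[X]) x y, b i (r • x) y = b i x (r • y)) :
    ∃ B : (⨁ i, W i) →ₗ[F] (⨁ i, W i) →ₗ[F] F,
      (∀ x, (∀ y, B x y = 0) → x = 0) ∧
      (∀ (r : F[X]) x y, B (r • x) y = B x (r • y)) := by
  classical
  refine ⟨LinearMap.mk₂ F (fun x y => ∑ i, b i (x i) (y i)) ?_ ?_ ?_ ?_, ?_, ?_⟩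
  · intro m₁ m₂ nn
    rw [← Finset.sum_add_distrib]
    apply Finset.sum_congr rfl
    intro i _
    rw [DirectSum.add_apply, map_add, LinearMap.add_apply]
  · intro c m nn
    rw [Finset.smul_sum]
    apply Finset.sum_congr rfl
    intro i _
    rw [DirectSum.smul_apply, map_smul, LinearMap.smul_apply]
  · intro m n₁ n₂
    rw [← Finset.sum_add_distrib]
    apply Finset.sum_congr rfl
    intro i _
    rw [DirectSum.add_apply, map_add]
  · intro c m nn
    rw [Finset.smul_sum]
    apply Finset.sum_congr rfl
    intro i _
    rw [DirectSum.smul_apply, map_smul]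
  · intro x hx
    refine DFinsupp.ext fun j => ?_
    refine hnd j (x j) ?_
    intro c
    have := hx (DirectSum.of W j c)
    rw [LinearMap.mk₂_apply] at this
    rw [Finset.sum_eq_single j] at this
    · rwa [DirectSum.of_eq_same] at this
    · intro i _ hij
      rw [DirectSum.of_eq_of_ne _ _ _ hij, map_zero]
    · intro h
      exact absurd (Finset.mem_univ j) h
  · intro r x y
    rw [LinearMap.mk₂_apply, LinearMap.mk₂_apply]
    apply Finset.sum_congr rfl
    intro i _
    rw [DirectSum.smul_apply, DirectSum.smul_apply, hc]


theorem block_lemma {F : Type*} [Field F] (g : F[X]) (hg : g ≠ 0) :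
    ∃ b : (F[X] ⧸ (Submodule.span F[X] {g})) →ₗ[F]
          (F[X] ⧸ (Submodule.span F[X] {g})) →ₗ[F] F,
      (∀ x, (∀ y, b x y = 0) → x = 0) ∧
      (∀ (r : F[X]) (x y), b (r • x) y = b x (r • y)) := by
  classical
  set S : Submodule F[X] F[X] := Submodule.span F[X] {g} with hS
  have hmem : ∀ a : F[X], a ∈ S ↔ g ∣ a := fun a => Ideal.mem_span_singleton
  set q : F[X] := g * C (g.leadingCoeff)⁻¹ with hq_def
  have hq : q.Monic := monic_mul_leadingCoeff_inv hg
  have hgq : g ∣ q := Dvd.intro _ rfl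
  have hqg : q ∣ g := by
    refine ⟨C g.leadingCoeff, ?_⟩
    rw [hq_def, mul_assoc, ← C_mul, inv_mul_cancel₀ (leadingCoeff_ne_zero.mpr hg), C_1, mul_one]
  set n : ℕ := q.natDegree with hn
  set ℓ : F[X] →ₗ[F] F := (lcoeff F (n - 1)).comp (Polynomial.modByMonicHom q) with hℓdef
  have hℓ : ∀ z : F[X], ℓ z = (z %ₘ q).coeff (n - 1) := fun z => rfl
  have hℓ0 : ∀ z : F[X], g ∣ z → ℓ z = 0 := by
    intro z hz
    rw [hℓ, (modByMonic_eq_zero_iff_dvd hq).mpr (dvd_trans hqg hz), coeff_zero]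
  set bf : F[X] → F[X] → F := fun a c => ℓ (a * c) with hbf
  have wd : ∀ a₁ b₁ a₂ b₂ : F[X], S.quotientRel a₁ a₂ → S.quotientRel b₁ b₂ →
      bf a₁ b₁ = bf a₂ b₂ := by
    intro a₁ b₁ a₂ b₂ h1 h2
    rw [Submodule.quotientRel_def] at h1 h2
    rw [hmem] at h1 h2
    have hd : g ∣ a₁ * b₁ - a₂ * b₂ := by
      have : a₁ * b₁ - a₂ * b₂ = (a₁ - a₂) * b₁ + a₂ * (b₁ - b₂) := by ring
      rw [this]
      exact dvd_add (h1.mul_right _) (h2.mul_left _)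
    have := hℓ0 _ hd
    rw [map_sub] at this
    exact sub_eq_zero.mp this
  set B : (F[X] ⧸ S) → (F[X] ⧸ S) → F := fun x y => Quotient.liftOn₂ x y bf wd with hBdef
  have hB : ∀ a c : F[X], B (Submodule.Quotient.mk a) (Submodule.Quotient.mk c) = ℓ (a * c) :=
    fun _ _ => rfl
  have hmks : ∀ x : F[X] ⧸ S, ∃ a, Submodule.Quotient.mk a = x := Submodule.Quotient.mk_surjective S
  refine ⟨LinearMap.mk₂ F B ?_ ?_ ?_ ?_, ?_, ?_⟩
  · intro m₁ m₂ nn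
    obtain ⟨a₁, rfl⟩ := hmks m₁; obtain ⟨a₂, rfl⟩ := hmks m₂; obtain ⟨c, rfl⟩ := hmks nn
    rw [← Submodule.Quotient.mk_add, hB, hB, hB, add_mul, map_add]
  · intro cc m nn
    obtain ⟨a, rfl⟩ := hmks m; obtain ⟨c, rfl⟩ := hmks nn
    rw [← Submodule.Quotient.mk_smul, hB, hB, smul_mul_assoc, map_smul, smul_eq_mul]
  · intro m n₁ n₂
    obtain ⟨a, rfl⟩ := hmks m; obtain ⟨c₁, rfl⟩ := hmks n₁; obtain ⟨c₂, rfl⟩ := hmks n₂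
    rw [← Submodule.Quotient.mk_add, hB, hB, hB, mul_add, map_add]
  · intro cc m nn
    obtain ⟨a, rfl⟩ := hmks m; obtain ⟨c, rfl⟩ := hmks nn
    rw [← Submodule.Quotient.mk_smul, hB, hB, mul_smul_comm, map_smul, smul_eq_mul]
  · -- nondegenerate
    intro x hx
    obtain ⟨a, rfl⟩ := hmks x
    rw [Submodule.Quotient.mk_eq_zero, hmem]
    by_contra hnd
    set r : F[X] := a %ₘ q with hr
    have hr0 : r ≠ 0 := by
      intro h
      exact hnd (dvd_trans hgq ((modByMonic_eq_zero_iff_dvd hq).mp h))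
    have hdr : r.natDegree < n := natDegree_lt_natDegree hr0 (degree_modByMonic_lt a hq)
    set d : ℕ := r.natDegree with hd
    set k : ℕ := n - 1 - d with hk
    have hmk_ar : (Submodule.Quotient.mk a : F[X] ⧸ S) = Submodule.Quotient.mk r := by
      rw [Submodule.Quotient.eq, hmem]
      have : a - r = q * (a /ₘ q) := by
        rw [hr, modByMonic_eq_sub_mul_div a q]; ring
      rw [this]
      exact hgq.mul_right _
    have hx' := hx (Submodule.Quotient.mk (X ^ k))
    rw [hmk_ar, LinearMap.mk₂_apply, hB] at hx'
    have hdeg2 : (r * X ^ k).degree < q.degree := by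
      apply degree_lt_degree
      rw [natDegree_mul hr0 (pow_ne_zero k X_ne_zero), natDegree_pow, natDegree_X]
      omega
    have hval : ℓ (r * X ^ k) = r.coeff d := by
      rw [hℓ, (modByMonic_eq_self_iff hq).mpr hdeg2, coeff_mul_X_pow']
      rw [if_pos (by omega : k ≤ n - 1)]
      congr 1
      omega
    rw [hval] at hx'
    exact (leadingCoeff_ne_zero.mpr hr0) hx'
  · -- compatibility
    intro rr x y
    obtain ⟨a, rfl⟩ := hmks x; obtain ⟨c, rfl⟩ := hmks y
    rw [← Submodule.Quotient.mk_smul, ← Submodule.Quotient.mk_smul]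
    rw [LinearMap.mk₂_apply, LinearMap.mk₂_apply, hB, hB, smul_eq_mul, smul_eq_mul]
    congr 1
    ring

theorem key_core {F : Type u} [Field F] {V : Type (max u v)} [AddCommGroup V] [Module F V]
    [FiniteDimensional F V] (τ : Module.End F V) :
    ∃ b : V →ₗ[F] V →ₗ[F] F, (∀ x, (∀ y, b x y = 0) → x = 0) ∧
      ∀ v w, b (τ v) w = b v (τ w) := by
  classical
  have htor : Module.IsTorsion F[X] (Module.AEval' τ) := by
    intro x
    refine ⟨⟨minpoly F τ, mem_nonZeroDivisors_of_ne_zero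
      (minpoly.ne_zero (LinearMap.isIntegral τ))⟩, ?_⟩
    show (minpoly F τ : F[X]) • x = 0
    apply (Module.AEval'.of τ).symm.injective
    rw [Module.AEval.of_symm_smul, minpoly.aeval]
    simp
  obtain ⟨ι, hι, p, hp, e, ⟨ee⟩⟩ :=
    Module.equiv_directSum_of_isTorsion (R := F[X]) (M := Module.AEval' τ) htor
  haveI := hι
  obtain ⟨b, hbnd, hbc⟩ := by
    refine dsum_lemma (F := F) (ι := ι) (fun i => F[X] ⧸ (Submodule.span F[X] {p i ^ e i}))
      (fun i => Classical.choose (block_lemma (p i ^ e i) (pow_ne_zero _ (hp i).ne_zero)))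
      (fun i => (Classical.choose_spec (block_lemma (p i ^ e i)
        (pow_ne_zero _ (hp i).ne_zero))).1)
      (fun i => (Classical.choose_spec (block_lemma (p i ^ e i)
        (pow_ne_zero _ (hp i).ne_zero))).2)
  set φ : V ≃ₗ[F] (⨁ i, F[X] ⧸ (Submodule.span F[X] {p i ^ e i})) :=
    (Module.AEval'.of τ).trans (ee.restrictScalars F) with hφ
  have hφX : ∀ v : V, φ (τ v) = (X : F[X]) • φ v := by
    intro v
    show (ee.restrictScalars F) (Module.AEval'.of τ (τ v)) = _
    rw [← Module.AEval'.X_smul_of]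
    show ee ((X : F[X]) • Module.AEval'.of τ v) = _
    rw [map_smul]
    rfl
  refine ⟨b.compl₁₂ φ.toLinearMap φ.toLinearMap, ?_, ?_⟩
  · intro x hx
    have : φ x = 0 := by
      refine hbnd (φ x) ?_
      intro y
      obtain ⟨w, rfl⟩ := φ.surjective y
      exact hx w
    simpa using φ.map_eq_zero_iff.mp this
  · intro v w
    show b (φ (τ v)) (φ w) = b (φ v) (φ (τ w))
    rw [hφX, hφX, hbc]

theorem key_lemma {F : Type u} [Field F] {V : Type v} [AddCommGroup V] [Module F V]
    [FiniteDimensional F V] (τ : Module.End F V) :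
    ∃ b : V →ₗ[F] V →ₗ[F] F, (∀ x, (∀ y, b x y = 0) → x = 0) ∧
      ∀ v w, b (τ v) w = b v (τ w) := by
  let eW : ULift.{u} V ≃ₗ[F] V := ULift.moduleEquiv
  haveI : FiniteDimensional F (ULift.{u} V) := Module.Finite.equiv eW.symm
  obtain ⟨b', h1, h2⟩ := key_core.{u, v} (F := F) (V := ULift.{u} V) (eW.symm.conj τ)
  refine ⟨b'.compl₁₂ eW.symm.toLinearMap eW.symm.toLinearMap, ?_, ?_⟩
  · intro x hx
    have : eW.symm x = 0 := by
      refine h1 (eW.symm x) ?_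
      intro y
      have := hx (eW y)
      simpa using this
    simpa using eW.symm.map_eq_zero_iff.mp this
  · intro v w
    show b' (eW.symm (τ v)) (eW.symm w) = b' (eW.symm v) (eW.symm (τ w))
    have hτ : ∀ z : V, eW.symm (τ z) = (eW.symm.conj τ) (eW.symm z) := by
      intro z
      rw [LinearEquiv.conj_apply_apply]
      simp
    rw [hτ, hτ, h2]

theorem conj_aeval {F A : Type*} [Field F] [Ring A] [Algebra F A] (x y z : A)
    (h : z * x = y * z) (q : F[X]) : aeval y q * z = z * aeval x q := by
  induction q using Polynomial.induction_on with
  | C a => simp [Algebra.commutes]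
  | add p r hp hr => simp [map_add, add_mul, mul_add, hp, hr]
  | monomial n a ih =>
    have e1 : (C a : F[X]) * X ^ (n + 1) = C a * X ^ n * X := by ring
    have L : aeval y (C a * X ^ n * X) = aeval y (C a * X ^ n) * y := by rw [map_mul, aeval_X]
    have R : aeval x (C a * X ^ n * X) = aeval x (C a * X ^ n) * x := by rw [map_mul, aeval_X]
    rw [e1, L, R, mul_assoc, ← h, ← mul_assoc, ih, mul_assoc]


theorem aeval_reverse {F A : Type*} [Field F] [Ring A] [Algebra F A] (x y : A)
    (h1 : x * y = 1) (h2 : y * x = 1) (q : F[X]) :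
    aeval x q.reverse = x ^ q.natDegree * aeval y q := by
  set n := q.natDegree with hn
  have hpow : ∀ i : ℕ, x ^ i * y ^ i = 1 := by
    intro i
    induction i with
    | zero => simp
    | succ k ih =>
      rw [pow_succ x k, pow_succ' y k, mul_assoc, ← mul_assoc x (y) (y ^ k), h1, one_mul, ih]
  have key : ∀ i : ℕ, i ≤ n → x ^ n * y ^ i = x ^ (n - i) := by
    intro i hi
    have : x ^ n = x ^ (n - i) * x ^ i := by rw [← pow_add, Nat.sub_add_cancel hi]
    rw [this, mul_assoc, hpow, mul_one]
  have hrd : q.reverse.natDegree < n + 1 := Nat.lt_succ_of_le q.reverse_natDegree_le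
  rw [aeval_eq_sum_range' hrd, aeval_eq_sum_range' (Nat.lt_succ_self n), Finset.mul_sum]
  have lhs_eq : ∀ j ∈ Finset.range (n + 1), q.reverse.coeff j • x ^ j
      = q.coeff (n - j) • x ^ j := by
    intro j hj
    rw [coeff_reverse, revAt_le (Nat.lt_succ_iff.mp (Finset.mem_range.mp hj))]
  rw [Finset.sum_congr rfl lhs_eq]
  have : ∀ i ∈ Finset.range (n + 1), x ^ n * q.coeff i • y ^ i = q.coeff i • x ^ (n - i) := by
    intro i hi
    rw [mul_smul_comm, key i (Nat.lt_succ_iff.mp (Finset.mem_range.mp hi))]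
  rw [Finset.sum_congr rfl this]
  conv_rhs => rw [← Finset.sum_range_reflect]
  apply Finset.sum_congr rfl
  intro i hi
  have hi' := Nat.lt_succ_iff.mp (Finset.mem_range.mp hi)
  have e2 : n + 1 - 1 - i = n - i := by omega
  have e3 : n - (n - i) = i := by omega
  rw [e2, e3]

theorem aux_rev {F : Type*} [Field F] (p : F[X]) (hm : p.Monic) (h0 : p.coeff 0 ≠ 0)
    (hd : p ∣ p.reverse) : p.reverse = p ∨ p.reverse = -p := by
  obtain ⟨t, ht⟩ := hd
  have hp0 : p ≠ 0 := hm.ne_zero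
  have ht0 : t ≠ 0 := by
    rintro rfl
    simp [Polynomial.reverse_eq_zero] at ht
    exact hp0 ht
  have hdeg : p.reverse.natDegree = p.natDegree := by
    rw [Polynomial.reverse_natDegree, Polynomial.natTrailingDegree_eq_zero.mpr (Or.inr h0)]
    omega
  have htdeg : t.natDegree = 0 := by
    have := hdeg
    rw [ht, Polynomial.natDegree_mul hp0 ht0] at this
    omega
  obtain ⟨c, rfl⟩ := Polynomial.natDegree_eq_zero.mp htdeg
  have hc1 : p.coeff 0 = c := by
    have := congrArg (fun q => Polynomial.coeff q p.natDegree) ht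
    simpa [Polynomial.coeff_reverse, Polynomial.revAt_le (le_refl p.natDegree),
      Polynomial.coeff_mul_C, hm.coeff_natDegree] using this
  have hc2 : c * c = 1 := by
    have := congrArg (fun q => Polynomial.coeff q 0) ht
    simp [Polynomial.coeff_zero_reverse, Polynomial.coeff_mul_C, hm.leadingCoeff, hc1] at this
    rw [this]
  rcases mul_self_eq_one_iff.mp hc2 with rfl | rfl
  · left; simp [ht]
  · right; rw [ht]; simp

/-- Let `σ` be the asymmetry of a non-degenerate bilinear form `f` and `p_σ` its minimal
polynomial.  Then `σ` is similar to `σ⁻¹`, the adjoint (reversed) polynomial `p_σ*` equals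
`±p_σ`, and every monic irreducible factor `p` of `p_σ` satisfies `gcd(p, p*) = 1` or
`p* = ±p`. -/
theorem stmt13 {F V : Type*} [Field F] [AddCommGroup V] [Module F V]
    [FiniteDimensional F V] (f : LinearMap.BilinForm F V)
    (hf : f.Nondegenerate) (σ : V ≃ₗ[F] V)
    (hσ : ∀ v w : V, f w v = f v (σ w)) :
    (∃ g : V ≃ₗ[F] V, (g : Module.End F V) * (σ : Module.End F V)
        = (σ.symm : Module.End F V) * (g : Module.End F V)) ∧
      ((minpoly F (σ : Module.End F V)).reverse = minpoly F (σ : Module.End F V) ∨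
        (minpoly F (σ : Module.End F V)).reverse = -(minpoly F (σ : Module.End F V))) ∧
      ∀ p : F[X], p.Monic → Irreducible p → p ∣ minpoly F (σ : Module.End F V) →
        IsCoprime p p.reverse ∨ p.reverse = p ∨ p.reverse = -p := by
  classical
  set u : Module.End F V := (σ : Module.End F V) with hu
  set u' : Module.End F V := (σ.symm : Module.End F V) with hu'
  have huapp : ∀ v, u v = σ v := fun _ => rfl
  have hu'app : ∀ v, u' v = σ.symm v := fun _ => rfl
  have huu' : u * u' = 1 := by
    ext v
    simp [Module.End.mul_apply, huapp, hu'app]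
  have hu'u : u' * u = 1 := by
    ext v
    simp [Module.End.mul_apply, huapp, hu'app]
  -- Part 1
  obtain ⟨b, hbnd, hbc⟩ := key_lemma u
  have hbnd' : LinearMap.BilinForm.Nondegenerate b := LinearMap.BilinForm.Nondegenerate.ofSeparatingLeft hbnd
  set g : V ≃ₗ[F] V :=
    (LinearMap.BilinForm.toDual b hbnd').trans (LinearMap.BilinForm.toDual f hf).symm with hgdef
  have hgid : ∀ v w, f (g v) w = b v w := by
    intro v w
    show f ((LinearMap.BilinForm.toDual f hf).symm ((LinearMap.BilinForm.toDual b hbnd') v)) w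
      = b v w
    rw [LinearMap.BilinForm.apply_toDual_symm_apply]
    exact LinearMap.BilinForm.toDual_def (B := b) hbnd'
  have hfinj : ∀ x y : V, (∀ w, f x w = f y w) → x = y := by
    intro x y h
    have h2 : ∀ w, f (x - y) w = 0 := by
      intro w
      rw [map_sub, LinearMap.sub_apply, h w, sub_self]
    exact sub_eq_zero.mp (hf.1 _ h2)
  have hcomm : ∀ v, g (σ v) = σ.symm (g v) := by
    intro v
    apply hfinj
    intro w
    rw [hgid]
    have l1 : b (σ v) w = b v (σ w) := hbc v w
    rw [l1, ← hgid, ← hσ (g v) w]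
    have l2 := hσ w (σ.symm (g v))
    rw [l2, LinearEquiv.apply_symm_apply]
  have part1 : ∃ gg : V ≃ₗ[F] V, (gg : Module.End F V) * u = u' * (gg : Module.End F V) := by
    refine ⟨g, ?_⟩
    ext v
    simpa [Module.End.mul_apply, huapp, hu'app] using hcomm v
  -- shared setup for parts 2, 3
  obtain ⟨g0, hg0⟩ := part1
  set P : F[X] := minpoly F u with hPdef
  have hint : IsIntegral F u := LinearMap.isIntegral u
  have hint' : IsIntegral F u' := LinearMap.isIntegral u'
  have hgg1 : (g0 : Module.End F V) * (g0.symm : Module.End F V) = 1 := by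
    ext v
    simp [Module.End.mul_apply]
  have hgg2 : (g0.symm : Module.End F V) * (g0 : Module.End F V) = 1 := by
    ext v
    simp [Module.End.mul_apply]
  have hg0' : (g0.symm : Module.End F V) * u' = u * (g0.symm : Module.End F V) := by
    have h1 := congrArg (fun t => (g0.symm : Module.End F V) * t * (g0.symm : Module.End F V)) hg0
    beta_reduce at h1
    calc (g0.symm : Module.End F V) * u'
        = (g0.symm : Module.End F V) * u' * ((g0 : Module.End F V) * (g0.symm : Module.End F V)) := by
          rw [hgg1, mul_one]
      _ = (g0.symm : Module.End F V) * (u' * (g0 : Module.End F V)) * (g0.symm : Module.End F V) := by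
          noncomm_ring
      _ = (g0.symm : Module.End F V) * ((g0 : Module.End F V) * u) * (g0.symm : Module.End F V) := by
          rw [hg0]
      _ = ((g0.symm : Module.End F V) * (g0 : Module.End F V)) * (u * (g0.symm : Module.End F V)) := by
          noncomm_ring
      _ = u * (g0.symm : Module.End F V) := by rw [hgg2, one_mul]
  have haev : ∀ (x y : Module.End F V) (z : V ≃ₗ[F] V),
      ((z : Module.End F V) * x = y * (z : Module.End F V)) →
      ∀ q : F[X], aeval x q = 0 → aeval y q = 0 := by
    intro x y z hz q hq
    have hc := conj_aeval x y (z : Module.End F V) hz q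
    rw [hq, mul_zero] at hc
    have hz1 : (z : Module.End F V) * (z.symm : Module.End F V) = 1 := by
      ext v
      simp [Module.End.mul_apply]
    calc aeval y q = aeval y q * ((z : Module.End F V) * (z.symm : Module.End F V)) := by
          rw [hz1, mul_one]
      _ = (aeval y q * (z : Module.End F V)) * (z.symm : Module.End F V) := by noncomm_ring
      _ = 0 := by rw [hc, zero_mul]
  have haP' : aeval u' P = 0 := haev u u' g0 hg0 P (minpoly.aeval F u)
  have haQ : aeval u (minpoly F u') = 0 := haev u' u g0.symm hg0' _ (minpoly.aeval F u')
  have hrev0 : aeval u P.reverse = 0 := by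
    rw [aeval_reverse u u' huu' hu'u P, haP', mul_zero]
  have hPdvd : P ∣ P.reverse := minpoly.dvd F u hrev0
  have hP0 : P ≠ 0 := minpoly.ne_zero hint
  have hPc0 : P.coeff 0 ≠ 0 := by
    intro h0
    obtain ⟨t, ht⟩ := (X_dvd_iff).mpr h0
    have haevP := minpoly.aeval F u
    rw [← hPdef] at haevP
    rw [ht, map_mul, aeval_X] at haevP
    have htz : aeval u t = 0 := by
      calc aeval u t = (u' * u) * aeval u t := by rw [hu'u, one_mul]
        _ = u' * (u * aeval u t) := by rw [mul_assoc]
        _ = 0 := by rw [haevP, mul_zero]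
    have hPt : P ∣ t := minpoly.dvd F u htz
    have ht0 : t ≠ 0 := by
      rintro rfl
      rw [mul_zero] at ht
      exact hP0 ht
    have hle : P.natDegree ≤ t.natDegree := natDegree_le_of_dvd hPt ht0
    have heq : P.natDegree = t.natDegree + 1 := by
      rw [ht, natDegree_mul X_ne_zero ht0, natDegree_X]
      omega
    omega
  have part2 := aux_rev P (minpoly.monic hint) hPc0 hPdvd
  refine ⟨⟨g0, hg0⟩, part2, ?_⟩
  -- Part 3
  intro p hm hi hd
  by_cases hpd : p ∣ p.reverse
  · right
    refine aux_rev p hm ?_ hpd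
    intro h0
    apply hPc0
    obtain ⟨t, ht⟩ := hd
    rw [ht, mul_coeff_zero, h0, zero_mul]
  · left
    exact hi.coprime_iff_not_dvd.mpr hpd
end

section
/- Let f be a non-degenerate bilinear form on V with asymmetry σ and minimal polynomial p_σ. Then: (a) the skew-symmetric part f⁻ (given by f⁻(v,w) = f(v,w) − f(w,v)) is non-degenerate if and only if p_σ(1) ≠ 0; (b) the symmetric part f⁺ (f⁺(v,w) = f(v,w) + f(w,v)) is non-degenerate if and only if p_σ(−1) ≠ 0. -/
open Polynomial

lemma stmt15_aux {F V : Type*} [Field F] [AddCommGroup V] [Module F V]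
    [FiniteDimensional F V] (f : LinearMap.BilinForm F V)
    (hf : f.Nondegenerate) (g : Module.End F V) (B : LinearMap.BilinForm F V)
    (hB : ∀ m n, B m n = f m (g n)) :
    B.Nondegenerate ↔ ∀ n, g n = 0 → n = 0 := by
  rw [← LinearMap.BilinForm.nondegenerate_flip_iff]
  constructor
  · intro h n hn
    apply h.1 n
    intro m
    show B m n = 0
    rw [hB, hn, map_zero]
  · intro h; refine LinearMap.BilinForm.Nondegenerate.ofSeparatingLeft fun n hn => ?_
    apply h n
    apply hf.flip.1 (g n)
    intro m
    have : B m n = 0 := hn m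
    rw [hB] at this
    exact this
    
/-- Let `f` be non-degenerate with asymmetry `σ` and let `p_σ` be the minimal polynomial
of `σ`.  Then the skew-symmetric part `f⁻ = f − f'` is non-degenerate iff `p_σ(1) ≠ 0`,
and the symmetric part `f⁺ = f + f'` is non-degenerate iff `p_σ(−1) ≠ 0`. -/
theorem stmt15 {F V : Type*} [Field F] [AddCommGroup V] [Module F V]
    [FiniteDimensional F V] (f : LinearMap.BilinForm F V)
    (hf : f.Nondegenerate) (σ : V ≃ₗ[F] V)
    (hσ : ∀ v w : V, f w v = f v (σ w)) :
    ((f - f.flip).Nondegenerate ↔ (minpoly F (σ : Module.End F V)).eval 1 ≠ 0) ∧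
      ((f + f.flip).Nondegenerate ↔ (minpoly F (σ : Module.End F V)).eval (-1) ≠ 0) := by
  set σ' : Module.End F V := (σ : Module.End F V) with hσ'
  have key : ∀ μ : F, ((minpoly F σ').eval μ ≠ 0 ↔ ∀ n : V, σ' n = μ • n → n = 0) := by
    intro μ
    rw [ne_eq, ← Polynomial.IsRoot.def, ← Module.End.hasEigenvalue_iff_isRoot,
      Module.End.hasEigenvalue_iff, not_not, Submodule.eq_bot_iff]
    constructor
    · intro h n hn
      exact h n (Module.End.mem_eigenspace_iff.mpr hn)
    · intro h n hn
      exact h n (Module.End.mem_eigenspace_iff.mp hn)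
  constructor
  · rw [stmt15_aux f hf (1 - σ') (f - f.flip) (by
      intro m n
      show f m n - f.flip m n = f m ((1 : Module.End F V) n - σ' n)
      rw [Module.End.one_apply, map_sub]
      show f m n - f n m = _
      rw [hσ m n]; rfl), key 1]
    have e : ∀ n : V, ((1 - σ') n = 0 ↔ σ' n = (1 : F) • n) := by
      intro n
      rw [LinearMap.sub_apply, Module.End.one_apply, one_smul, sub_eq_zero, eq_comm]
    exact ⟨fun h n hn => h n ((e n).mpr hn), fun h n hn => h n ((e n).mp hn)⟩
  · rw [stmt15_aux f hf (1 + σ') (f + f.flip) (by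
      intro m n
      show f m n + f.flip m n = f m ((1 : Module.End F V) n + σ' n)
      rw [Module.End.one_apply, map_add]
      show f m n + f n m = _
      rw [hσ m n]; rfl), key (-1)]
    have e : ∀ n : V, ((1 + σ') n = 0 ↔ σ' n = (-1 : F) • n) := by
      intro n
      rw [LinearMap.add_apply, Module.End.one_apply, neg_smul, one_smul]
      constructor
      · exact fun h => eq_neg_of_add_eq_zero_right h
      · intro h; rw [h]; abel
    exact ⟨fun h n hn => h n ((e n).mpr hn), fun h n hn => h n ((e n).mp hn)⟩
end

section
/- Let F be a field of characteristic not 2 and f a bilinear form on V whose skew-symmetric part f⁻ is non-degenerate. Let σ^{-+} be defined by f⁺(v,w) = f⁻(v, σ^{-+}w). Then L(f) equals the centralizer of σ^{-+} in L(f⁻): L(f) = {x ∈ L(f⁻) : xσ^{-+} = σ^{-+}x}. -/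
/-- In characteristic `≠ 2`, if the skew-symmetric part `f⁻` of a bilinear form `f` is
non-degenerate and `σ⁻⁺` is defined by `f⁺(v,w) = f⁻(v, σ⁻⁺ w)`, then `L(f)` is exactly
the centralizer of `σ⁻⁺` in `L(f⁻)`. -/
theorem stmt17 {F V : Type*} [Field F] [AddCommGroup V] [Module F V]
    [FiniteDimensional F V] (hchar : ringChar F ≠ 2)
    (f : LinearMap.BilinForm F V) (hfm : (f - f.flip).Nondegenerate)
    (σmp : Module.End F V)
    (hσmp : ∀ v w : V, (f + f.flip) v w = (f - f.flip) v (σmp w)) :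
    ∀ x : Module.End F V, x ∈ skewAdjointLieSubalgebra f ↔
      (x ∈ skewAdjointLieSubalgebra (f - f.flip) ∧ x * σmp = σmp * x) := by
  have h2 : (2 : F) ≠ 0 := Ring.two_ne_zero hchar
  -- right-nondegeneracy of f - f.flip (it is alternating/skew)
  have hright : ∀ u : V, (∀ v : V, (f - f.flip) v u = 0) → u = 0 := by
    intro u hu
    apply hfm.1 u
    intro n
    have h1 := hu n
    simp only [LinearMap.sub_apply, LinearMap.BilinForm.flip_apply] at h1 ⊢
    linear_combination -h1
  intro x
  constructor
  · intro hx
    have h0 : LinearMap.IsAdjointPair (-f) f x x := hx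
    have h : ∀ v w, f (x v) w = - f v (x w) := by
      intro v w; simpa using h0 v w
    have hminus : ∀ v w, (f - f.flip) (x v) w = - (f - f.flip) v (x w) := by
      intro v w
      simp only [LinearMap.sub_apply, LinearMap.BilinForm.flip_apply]
      linear_combination h v w - h w v
    have hplus : ∀ v w, (f + f.flip) (x v) w = - (f + f.flip) v (x w) := by
      intro v w
      simp only [LinearMap.add_apply, LinearMap.BilinForm.flip_apply]
      linear_combination h v w + h w v
    refine ⟨?_, ?_⟩
    · show LinearMap.IsAdjointPair (-(f - f.flip)) (f - f.flip) x x
      intro v w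
      simpa using hminus v w
    · ext w
      have key : ∀ v : V, (f - f.flip) v (x (σmp w) - σmp (x w)) = 0 := by
        intro v
        have e1 : (f - f.flip) (x v) (σmp w) = - (f - f.flip) v (x (σmp w)) :=
          hminus v (σmp w)
        have e2 : (f + f.flip) (x v) w = (f - f.flip) (x v) (σmp w) := hσmp (x v) w
        have e3 : (f + f.flip) (x v) w = - (f + f.flip) v (x w) := hplus v w
        have e4 : (f + f.flip) v (x w) = (f - f.flip) v (σmp (x w)) := hσmp v (x w)
        have e5 : (f - f.flip) v (x (σmp w)) = (f - f.flip) v (σmp (x w)) := by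
          have h6 := e2.symm.trans e3
          rw [e4] at h6
          linear_combination e1 - h6
        rw [map_sub, e5, sub_self]
      have := sub_eq_zero.mp (hright _ key)
      simpa [Module.End.mul_apply] using this
  · rintro ⟨hx, hcomm⟩
    have h0 : LinearMap.IsAdjointPair (-(f - f.flip)) (f - f.flip) x x := hx
    have hminus : ∀ v w, (f - f.flip) (x v) w = - (f - f.flip) v (x w) := by
      intro v w; simpa using h0 v w
    have hcomm' : ∀ w, x (σmp w) = σmp (x w) := by
      intro w
      have := congrArg (fun g : Module.End F V => g w) hcomm
      simpa [Module.End.mul_apply] using this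
    have hplus : ∀ v w, (f + f.flip) (x v) w = - (f + f.flip) v (x w) := by
      intro v w
      rw [hσmp (x v) w, hminus v (σmp w), hcomm' w, ← hσmp v (x w)]
    show LinearMap.IsAdjointPair (-f) f x x
    intro v w
    have hp := hplus v w
    have hm := hminus v w
    simp only [LinearMap.add_apply, LinearMap.sub_apply,
      LinearMap.BilinForm.flip_apply] at hp hm
    have key : (2 : F) * f (x v) w = (2 : F) * (- f v (x w)) := by
      linear_combination hp + hm
    have := mul_left_cancel₀ h2 key
    simpa using this
end

section
/- Let char F ≠ 2 and n ≥ 1, and let Γ_n be the n×n matrix with Gram form as in the paper (Γ_1 = (1), Γ_2 = [[0,−1],[1,1]], etc., the standard indecomposable forms with cyclic unipotent/−unipotent asymmetry). Then Γ_n is invertible, its asymmetry S_n = Γ_n^{-1}Γ_n' is cyclic with minimal polynomial (X − ε)^n where ε = (−1)^{n+1}, and L(Γ_n) = {X : XᵀΓ_n + Γ_nX = 0} is an abelian Lie algebra of dimension ⌊n/2⌋, consisting of upper triangular matrices with constant super-diagonals in which all super-diagonals at even distance from the main diagonal vanish. -/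
open Polynomial Matrix Finset

attribute [local instance 100] LieRing.ofAssociativeRing

variable {F : Type*} [Field F]


def GammaMatrix (F : Type*) [Field F] (n : ℕ) : Matrix (Fin n) (Fin n) F :=
  Matrix.of fun i j =>
    if (i : ℕ) + (j : ℕ) = n - 1 ∨ (i : ℕ) + (j : ℕ) = n
      then (-1 : F) ^ ((i : ℕ) + n + 1) else 0

namespace Stmt18Aux

/-- `(-1)^a` depends only on parity. -/
lemma negpow (a b : ℕ) (h : a % 2 = b % 2) : (-1 : F) ^ a = (-1 : F) ^ b := by
  rw [← Nat.div_add_mod a 2, ← Nat.div_add_mod b 2, pow_add, pow_add, pow_mul, pow_mul]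
  norm_num [h]

lemma negpow_mul_self (a : ℕ) : (-1 : F) ^ a * (-1 : F) ^ a = 1 := by
  rw [← pow_add, negpow (a + a) 0 (by omega), pow_zero]

variable {n : ℕ}

/-- Totalized entry function. -/
def ent (M : Matrix (Fin n) (Fin n) F) (p q : ℕ) : F :=
  if h : p < n ∧ q < n then M ⟨p, h.1⟩ ⟨q, h.2⟩ else 0

lemma ent_fin (M : Matrix (Fin n) (Fin n) F) (i j : Fin n) :
    ent M (i : ℕ) (j : ℕ) = M i j := by
  rw [ent, dif_pos ⟨i.2, j.2⟩]

/-- Sum against a row/column pattern of `Γ`. -/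
lemma rowcol (hn : 1 ≤ n) (i : ℕ) (hi : i < n) (f : ℕ → F) :
    ∑ k : Fin n, (if i + (k : ℕ) = n - 1 ∨ i + (k : ℕ) = n then f k else 0)
      = f (n - 1 - i) + (if 1 ≤ i then f (n - i) else 0) := by
  rw [Fin.sum_univ_eq_sum_range (fun m => if i + m = n - 1 ∨ i + m = n then f m else 0)]
  have hc : ∀ m ∈ Finset.range n,
      (if i + m = n - 1 ∨ i + m = n then f m else 0)
        = (if m = n - 1 - i then f m else 0) + (if m = n - i then f m else 0) := by
    intro m hm
    simp only [Finset.mem_range] at hm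
    by_cases h1 : m = n - 1 - i <;> by_cases h2 : m = n - i
    · omega
    · rw [if_pos (by omega), if_pos h1, if_neg h2, add_zero]
    · rw [if_pos (by omega), if_neg h1, if_pos h2, zero_add]
    · rw [if_neg (by omega), if_neg h1, if_neg h2, add_zero]
  rw [Finset.sum_congr rfl hc, Finset.sum_add_distrib,
    Finset.sum_ite_eq' (Finset.range n) (n - 1 - i) f,
    Finset.sum_ite_eq' (Finset.range n) (n - i) f,
    if_pos (Finset.mem_range.2 (by omega))]
  congr 1
  by_cases h : 1 ≤ i
  · rw [if_pos h, if_pos (Finset.mem_range.2 (by omega))]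
  · rw [if_neg h, if_neg (by simp only [Finset.mem_range]; omega)]

lemma Gmul_apply (hn : 1 ≤ n) (X : Matrix (Fin n) (Fin n) F) (i j : Fin n) :
    (GammaMatrix F n * X) i j
      = (-1 : F) ^ ((i : ℕ) + n + 1) * ent X (n - 1 - (i : ℕ)) (j : ℕ)
        + (if 1 ≤ (i : ℕ) then (-1 : F) ^ ((i : ℕ) + n + 1) * ent X (n - (i : ℕ)) (j : ℕ)
            else 0) := by
  rw [Matrix.mul_apply]
  have := rowcol (F := F) hn (i : ℕ) i.2
    (fun m => (-1 : F) ^ ((i : ℕ) + n + 1) * ent X m (j : ℕ))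
  rw [← this]
  apply Finset.sum_congr rfl
  intro k _
  rw [GammaMatrix, Matrix.of_apply, ent_fin]
  by_cases h : (i : ℕ) + (k : ℕ) = n - 1 ∨ (i : ℕ) + (k : ℕ) = n
  · rw [if_pos h, if_pos h]
  · rw [if_neg h, if_neg h, zero_mul]

lemma mulGt_apply (hn : 1 ≤ n) (X : Matrix (Fin n) (Fin n) F) (i j : Fin n) :
    (X * (GammaMatrix F n)ᵀ) i j
      = (-1 : F) ^ ((j : ℕ) + n + 1) * ent X (i : ℕ) (n - 1 - (j : ℕ))
        + (if 1 ≤ (j : ℕ) then (-1 : F) ^ ((j : ℕ) + n + 1) * ent X (i : ℕ) (n - (j : ℕ))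
            else 0) := by
  rw [Matrix.mul_apply]
  have := rowcol (F := F) hn (j : ℕ) j.2
    (fun m => (-1 : F) ^ ((j : ℕ) + n + 1) * ent X (i : ℕ) m)
  rw [← this]
  apply Finset.sum_congr rfl
  intro k _
  rw [Matrix.transpose_apply, GammaMatrix, Matrix.of_apply, ent_fin]
  by_cases h : (j : ℕ) + (k : ℕ) = n - 1 ∨ (j : ℕ) + (k : ℕ) = n
  · rw [if_pos h, if_pos h, mul_comm]
  · rw [if_neg h, if_neg h, mul_zero]

lemma tmulG_apply (hn : 1 ≤ n) (X : Matrix (Fin n) (Fin n) F) (i j : Fin n) :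
    (Xᵀ * GammaMatrix F n) i j
      = (-1 : F) ^ (j : ℕ) * ent X (n - 1 - (j : ℕ)) (i : ℕ)
        + (if 1 ≤ (j : ℕ) then (-1 : F) ^ ((j : ℕ) + 1) * ent X (n - (j : ℕ)) (i : ℕ)
            else 0) := by
  rw [Matrix.mul_apply]
  have := rowcol (F := F) hn (j : ℕ) j.2
    (fun m => (-1 : F) ^ (m + n + 1) * ent X m (i : ℕ))
  calc ∑ k : Fin n, Xᵀ i k * GammaMatrix F n k j
      = ∑ k : Fin n, (if (j : ℕ) + (k : ℕ) = n - 1 ∨ (j : ℕ) + (k : ℕ) = n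
          then (-1 : F) ^ ((k : ℕ) + n + 1) * ent X (k : ℕ) (i : ℕ) else 0) := by
        apply Finset.sum_congr rfl
        intro k _
        rw [Matrix.transpose_apply, GammaMatrix, Matrix.of_apply, ent_fin]
        by_cases h : (k : ℕ) + (j : ℕ) = n - 1 ∨ (k : ℕ) + (j : ℕ) = n
        · rw [if_pos h, if_pos (by omega), mul_comm]
        · rw [if_neg h, if_neg (by omega), mul_zero]
    _ = _ := by
        rw [this]
        congr 1
        · rw [negpow ((n - 1 - (j : ℕ)) + n + 1) (j : ℕ) (by have := j.2; omega)]
        · by_cases h : 1 ≤ (j : ℕ)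
          · rw [if_pos h, if_pos h,
              negpow ((n - (j : ℕ)) + n + 1) ((j : ℕ) + 1) (by have := j.2; omega)]
          · rw [if_neg h, if_neg h]

lemma ent_oob (M : Matrix (Fin n) (Fin n) F) (p q : ℕ) (h : n ≤ p ∨ n ≤ q) :
    ent M p q = 0 := by
  rw [ent, dif_neg (by omega)]

/-- explicit inverse of `Γ`. -/
def Ginv (n : ℕ) : Matrix (Fin n) (Fin n) F :=
  Matrix.of fun i j => if (i : ℕ) + (j : ℕ) ≤ n - 1 then (-1 : F) ^ (i : ℕ) else 0

lemma ent_Ginv (p q : ℕ) :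
    ent (Ginv (F := F) n) p q
      = if p + q ≤ n - 1 ∧ p < n ∧ q < n then (-1 : F) ^ p else 0 := by
  by_cases h : p < n ∧ q < n
  · rw [ent, dif_pos h]
    show (if p + q ≤ n - 1 then _ else 0) = _
    by_cases h2 : p + q ≤ n - 1
    · rw [if_pos h2, if_pos ⟨h2, h⟩]
    · rw [if_neg h2, if_neg (by tauto)]
  · rw [ent, dif_neg h, if_neg (by tauto)]

lemma Gmul_Ginv (hn : 1 ≤ n) : GammaMatrix F n * Ginv (F := F) n = 1 := by
  ext i j
  have hi := i.2; have hj := j.2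
  rw [Gmul_apply hn, Matrix.one_apply, ent_Ginv, ent_Ginv]
  rcases lt_trichotomy ((i : ℕ)) ((j : ℕ)) with hlt | heq | hgt
  · rw [if_neg (by omega), mul_zero, zero_add,
      if_neg (by omega : ¬(n - (i : ℕ) + (j : ℕ) ≤ n - 1 ∧ n - (i : ℕ) < n ∧ (j : ℕ) < n)),
      mul_zero, ite_self, if_neg (fun h => by rw [h] at hlt; omega)]
  · rw [if_pos (by omega), if_neg (by omega : ¬(n - (i : ℕ) + (j : ℕ) ≤ n - 1 ∧
        n - (i : ℕ) < n ∧ (j : ℕ) < n)), mul_zero, ite_self, add_zero,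
      if_pos (Fin.ext heq), ← pow_add,
      negpow ((i : ℕ) + n + 1 + (n - 1 - (i : ℕ))) 0 (by omega), pow_zero]
  · rw [if_pos (by omega), if_pos (by omega : 1 ≤ (i : ℕ)), if_pos (by omega), ← pow_add,
      ← pow_add, negpow ((i : ℕ) + n + 1 + (n - 1 - (i : ℕ))) 0 (by omega),
      negpow ((i : ℕ) + n + 1 + (n - (i : ℕ))) 1 (by omega), pow_zero, pow_one,
      if_neg (fun h => by rw [h] at hgt; omega)]
    ring

lemma Ginv_eq (hn : 1 ≤ n) : (GammaMatrix F n)⁻¹ = Ginv (F := F) n :=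
  Matrix.inv_eq_right_inv (Gmul_Ginv hn)

lemma isUnit_G (hn : 1 ≤ n) : IsUnit (GammaMatrix F n) :=
  ⟨⟨_, Ginv (F := F) n, Gmul_Ginv hn, mul_eq_one_comm.mp (Gmul_Ginv hn)⟩, rfl⟩

/-- the asymmetry `S = Γ⁻¹Γᵀ`, explicitly. -/
def Smat (n : ℕ) : Matrix (Fin n) (Fin n) F :=
  Matrix.of fun i j =>
    (if (i : ℕ) ≤ (j : ℕ) then (-1 : F) ^ ((i : ℕ) + (j : ℕ) + n + 1) else 0)
      + (if (i : ℕ) < (j : ℕ) then (-1 : F) ^ ((i : ℕ) + (j : ℕ) + n + 1) else 0)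

lemma ent_Smat (p q : ℕ) :
    ent (Smat (F := F) n) p q
      = (if p ≤ q ∧ q < n then (-1 : F) ^ (p + q + n + 1) else 0)
        + (if p < q ∧ q < n then (-1 : F) ^ (p + q + n + 1) else 0) := by
  by_cases h : p < n ∧ q < n
  · rw [ent, dif_pos h]
    simp only [Smat, Matrix.of_apply]
    congr 1
    · by_cases h2 : p ≤ q
      · rw [if_pos h2, if_pos ⟨h2, h.2⟩]
      · rw [if_neg h2, if_neg (by tauto)]
    · by_cases h2 : p < q
      · rw [if_pos h2, if_pos ⟨h2, h.2⟩]
      · rw [if_neg h2, if_neg (by tauto)]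
  · rw [ent, dif_neg h, if_neg (by omega), if_neg (by omega), add_zero]

lemma Ginv_mulGt (hn : 1 ≤ n) :
    Ginv (F := F) n * (GammaMatrix F n)ᵀ = Smat n := by
  ext i j
  have hi := i.2; have hj := j.2
  rw [mulGt_apply hn, ent_Ginv, ent_Ginv]
  simp only [Smat, Matrix.of_apply]
  rcases lt_trichotomy ((i : ℕ)) ((j : ℕ)) with hlt | heq | hgt
  · rw [if_pos (by omega), if_pos (by omega : 1 ≤ (j : ℕ)), if_pos (by omega),
      if_pos (by omega : (i : ℕ) ≤ (j : ℕ)), if_pos hlt, ← pow_add,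
      negpow ((j : ℕ) + n + 1 + (i : ℕ)) ((i : ℕ) + (j : ℕ) + n + 1) (by omega)]
  · rw [if_pos (by omega), if_neg (by omega : ¬((i : ℕ) + (n - (j : ℕ)) ≤ n - 1 ∧
        (i : ℕ) < n ∧ n - (j : ℕ) < n)), mul_zero, ite_self, add_zero,
      if_pos (by omega : (i : ℕ) ≤ (j : ℕ)), if_neg (by omega : ¬(i : ℕ) < (j : ℕ)), add_zero,
      ← pow_add, negpow ((j : ℕ) + n + 1 + (i : ℕ)) ((i : ℕ) + (j : ℕ) + n + 1) (by omega)]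
  · rw [if_neg (by omega : ¬((i : ℕ) + (n - 1 - (j : ℕ)) ≤ n - 1 ∧
        (i : ℕ) < n ∧ n - 1 - (j : ℕ) < n)), mul_zero, zero_add,
      if_neg (by omega : ¬((i : ℕ) + (n - (j : ℕ)) ≤ n - 1 ∧
        (i : ℕ) < n ∧ n - (j : ℕ) < n)), mul_zero, ite_self,
      if_neg (by omega : ¬(i : ℕ) ≤ (j : ℕ)), if_neg (by omega : ¬(i : ℕ) < (j : ℕ)), add_zero]

/-- shift matrix -/
def Nm (n : ℕ) : Matrix (Fin n) (Fin n) F :=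
  Matrix.of fun i j => if (i : ℕ) + 1 = (j : ℕ) then 1 else 0

/-- inverse of `1 + Nm` -/
def Vm (n : ℕ) : Matrix (Fin n) (Fin n) F :=
  Matrix.of fun i j => if (i : ℕ) ≤ (j : ℕ) then (-1 : F) ^ ((j : ℕ) - (i : ℕ)) else 0

lemma Nmul_apply (M : Matrix (Fin n) (Fin n) F) (i j : Fin n) :
    (Nm (F := F) n * M) i j = ent M ((i : ℕ) + 1) (j : ℕ) := by
  rw [Matrix.mul_apply]
  calc ∑ k : Fin n, Nm n i k * M k j
      = ∑ k : Fin n, (fun m => if m = (i : ℕ) + 1 then ent M m (j : ℕ) else 0) ((k : ℕ)) := by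
        apply Finset.sum_congr rfl
        intro k _
        simp only [Nm, Matrix.of_apply, ent_fin]
        by_cases h : (i : ℕ) + 1 = (k : ℕ)
        · rw [if_pos h, if_pos h.symm, one_mul]
        · rw [if_neg h, if_neg (fun hh => h hh.symm), zero_mul]
    _ = ∑ m ∈ Finset.range n, (if m = (i : ℕ) + 1 then ent M m (j : ℕ) else 0) :=
        Fin.sum_univ_eq_sum_range (fun m => if m = (i : ℕ) + 1 then ent M m (j : ℕ) else 0) n
    _ = _ := by
        rw [Finset.sum_ite_eq' (Finset.range n) ((i : ℕ) + 1) (fun m => ent M m (j : ℕ))]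
        by_cases h : (i : ℕ) + 1 < n
        · rw [if_pos (Finset.mem_range.2 h)]
        · rw [if_neg (by simp only [Finset.mem_range]; omega),
            ent_oob _ _ _ (by omega)]

lemma mulN_apply (M : Matrix (Fin n) (Fin n) F) (i j : Fin n) :
    (M * Nm (F := F) n) i j = if 1 ≤ (j : ℕ) then ent M (i : ℕ) ((j : ℕ) - 1) else 0 := by
  rw [Matrix.mul_apply]
  by_cases hj : 1 ≤ (j : ℕ)
  · rw [if_pos hj]
    calc ∑ k : Fin n, M i k * Nm n k j
        = ∑ k : Fin n, (fun m => if m = (j : ℕ) - 1 then ent M (i : ℕ) m else 0) ((k : ℕ)) := by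
          apply Finset.sum_congr rfl
          intro k _
          simp only [Nm, Matrix.of_apply, ent_fin]
          by_cases h : (k : ℕ) + 1 = (j : ℕ)
          · rw [if_pos h, if_pos (by omega), mul_one]
          · rw [if_neg h, if_neg (by omega), mul_zero]
      _ = ∑ m ∈ Finset.range n, (if m = (j : ℕ) - 1 then ent M (i : ℕ) m else 0) :=
          Fin.sum_univ_eq_sum_range (fun m => if m = (j : ℕ) - 1 then ent M (i : ℕ) m else 0) n
      _ = _ := by
          rw [Finset.sum_ite_eq' (Finset.range n) ((j : ℕ) - 1) (fun m => ent M (i : ℕ) m),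
            if_pos (Finset.mem_range.2 (by have := j.2; omega))]
  · rw [if_neg hj]
    apply Finset.sum_eq_zero
    intro k _
    simp only [Nm, Matrix.of_apply]
    rw [if_neg (by omega), mul_zero]

lemma ent_Npow (d p q : ℕ) :
    ent ((Nm (F := F) n) ^ d) p q = if p + d = q ∧ q < n then 1 else 0 := by
  induction d generalizing q with
  | zero =>
    by_cases h : p < n ∧ q < n
    · rw [pow_zero, ent, dif_pos h, Matrix.one_apply]
      by_cases h2 : p = q
      · rw [if_pos (by subst h2; rfl), if_pos (by omega)]
      · rw [if_neg (by simp only [Fin.mk.injEq]; omega), if_neg (by omega)]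
    · rw [ent_oob _ _ _ (by omega), if_neg (by omega)]
  | succ d ih =>
    by_cases h : p < n ∧ q < n
    · rw [pow_succ, ent, dif_pos h, mulN_apply]
      by_cases hq : 1 ≤ q
      · rw [if_pos hq, ih (q - 1)]
        by_cases h2 : p + d = q - 1
        · rw [if_pos ⟨h2, by omega⟩, if_pos (by omega)]
        · rw [if_neg (by omega), if_neg (by omega)]
      · rw [if_neg hq, if_neg (by omega)]
    · rw [ent_oob _ _ _ (by omega), if_neg (by omega)]

lemma Npow_n : (Nm (F := F) n) ^ n = 0 := by
  ext i j
  have h := ent_Npow (F := F) (n := n) n (i : ℕ) (j : ℕ)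
  rw [ent_fin] at h
  rw [h, if_neg (by have := j.2; omega), Matrix.zero_apply]

lemma ent_Vm (p q : ℕ) :
    ent (Vm (F := F) n) p q = if p ≤ q ∧ q < n then (-1 : F) ^ (q - p) else 0 := by
  by_cases h : p < n ∧ q < n
  · rw [ent, dif_pos h]
    simp only [Vm, Matrix.of_apply]
    by_cases h2 : p ≤ q
    · rw [if_pos h2, if_pos ⟨h2, h.2⟩]
    · rw [if_neg h2, if_neg (by tauto)]
  · rw [ent_oob _ _ _ (by omega), if_neg (by omega)]

lemma key1 (hn : 1 ≤ n) :
    (1 + Nm (F := F) n) * Smat n = ((-1 : F) ^ (n + 1)) • (1 - Nm n) := by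
  ext i j
  have hi := i.2; have hj := j.2
  rw [add_mul, one_mul, Matrix.add_apply, Nmul_apply, ent_Smat]
  simp only [Smat, Matrix.smul_apply, Matrix.sub_apply, Matrix.one_apply, Nm,
    Matrix.of_apply, smul_eq_mul]
  rcases lt_trichotomy ((j : ℕ)) ((i : ℕ) + 1) with hlt | heq | hgt
  · rcases Nat.lt_or_ge ((j : ℕ)) ((i : ℕ)) with hlt2 | hge
    · rw [if_neg (by omega : ¬(i : ℕ) ≤ (j : ℕ)), if_neg (by omega : ¬(i : ℕ) < (j : ℕ)),
        if_neg (by omega : ¬((i : ℕ) + 1 ≤ (j : ℕ) ∧ (j : ℕ) < n)),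
        if_neg (by omega : ¬((i : ℕ) + 1 < (j : ℕ) ∧ (j : ℕ) < n)),
        if_neg (by intro h; exact absurd (congrArg Fin.val h) (by omega)),
        if_neg (by omega : ¬(i : ℕ) + 1 = (j : ℕ))]
      ring
    · have heq2 : (i : ℕ) = (j : ℕ) := by omega
      rw [if_pos (by omega : (i : ℕ) ≤ (j : ℕ)), if_neg (by omega : ¬(i : ℕ) < (j : ℕ)),
        if_neg (by omega : ¬((i : ℕ) + 1 ≤ (j : ℕ) ∧ (j : ℕ) < n)),
        if_neg (by omega : ¬((i : ℕ) + 1 < (j : ℕ) ∧ (j : ℕ) < n)),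
        if_pos (Fin.ext heq2), if_neg (by omega : ¬(i : ℕ) + 1 = (j : ℕ)),
        negpow ((i : ℕ) + (j : ℕ) + n + 1) (n + 1) (by omega)]
      ring
  · rw [if_pos (by omega : (i : ℕ) ≤ (j : ℕ)), if_pos (by omega : (i : ℕ) < (j : ℕ)),
      if_pos (⟨by omega, hj⟩ : (i : ℕ) + 1 ≤ (j : ℕ) ∧ (j : ℕ) < n),
      if_neg (by omega : ¬((i : ℕ) + 1 < (j : ℕ) ∧ (j : ℕ) < n)),
      if_neg (by intro h; exact absurd (congrArg Fin.val h) (by omega)),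
      if_pos (by omega : (i : ℕ) + 1 = (j : ℕ)),
      negpow ((i : ℕ) + (j : ℕ) + n + 1) n (by omega),
      negpow ((i : ℕ) + 1 + (j : ℕ) + n + 1) (n + 1) (by omega), pow_succ]
    ring
  · rw [if_pos (by omega : (i : ℕ) ≤ (j : ℕ)), if_pos (by omega : (i : ℕ) < (j : ℕ)),
      if_pos (⟨by omega, hj⟩ : (i : ℕ) + 1 ≤ (j : ℕ) ∧ (j : ℕ) < n),
      if_pos (⟨by omega, hj⟩ : (i : ℕ) + 1 < (j : ℕ) ∧ (j : ℕ) < n),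
      if_neg (by intro h; exact absurd (congrArg Fin.val h) (by omega)),
      if_neg (by omega : ¬(i : ℕ) + 1 = (j : ℕ)),
      negpow ((i : ℕ) + 1 + (j : ℕ) + n + 1) ((i : ℕ) + (j : ℕ) + n + 1 + 1) (by omega),
      pow_succ]
    ring

lemma NS_comm : Nm (F := F) n * Smat n = Smat n * Nm n := by
  ext i j
  have hi := i.2; have hj := j.2
  rw [Nmul_apply, mulN_apply, ent_Smat]
  by_cases hj1 : 1 ≤ (j : ℕ)
  · rw [if_pos hj1, ent_Smat]
    congr 1
    · by_cases h : (i : ℕ) + 1 ≤ (j : ℕ)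
      · rw [if_pos ⟨h, hj⟩, if_pos ⟨by omega, by omega⟩,
          negpow ((i : ℕ) + 1 + (j : ℕ) + n + 1) ((i : ℕ) + ((j : ℕ) - 1) + n + 1) (by omega)]
      · rw [if_neg (by omega), if_neg (by omega)]
    · by_cases h : (i : ℕ) + 1 < (j : ℕ)
      · rw [if_pos ⟨h, hj⟩, if_pos ⟨by omega, by omega⟩,
          negpow ((i : ℕ) + 1 + (j : ℕ) + n + 1) ((i : ℕ) + ((j : ℕ) - 1) + n + 1) (by omega)]
      · rw [if_neg (by omega), if_neg (by omega)]
  · rw [if_neg hj1, if_neg (by omega), if_neg (by omega), add_zero]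

lemma UVone : (1 + Nm (F := F) n) * Vm n = 1 := by
  ext i j
  have hi := i.2; have hj := j.2
  rw [add_mul, one_mul, Matrix.add_apply, Nmul_apply, ent_Vm, Matrix.one_apply]
  simp only [Vm, Matrix.of_apply]
  rcases lt_trichotomy ((j : ℕ)) ((i : ℕ)) with hlt | heq | hgt
  · rw [if_neg (by omega : ¬(i : ℕ) ≤ (j : ℕ)), if_neg (by omega), zero_add,
      if_neg (fun h => by rw [h] at hlt; omega)]
  · rw [if_pos (by omega : (i : ℕ) ≤ (j : ℕ)), if_neg (by omega), add_zero,
      if_pos (Fin.ext heq.symm), negpow ((j : ℕ) - (i : ℕ)) 0 (by omega), pow_zero]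
  · rw [if_pos (by omega : (i : ℕ) ≤ (j : ℕ)), if_pos ⟨by omega, hj⟩,
      if_neg (by intro h; exact absurd (congrArg Fin.val h) (by omega)),
      negpow ((j : ℕ) - (i : ℕ)) ((j : ℕ) - ((i : ℕ) + 1) + 1) (by omega), pow_succ]
    ring

lemma VUone : Vm (F := F) n * (1 + Nm n) = 1 := by
  ext i j
  have hi := i.2; have hj := j.2
  rw [mul_add, mul_one, Matrix.add_apply, mulN_apply, ent_Vm, Matrix.one_apply]
  simp only [Vm, Matrix.of_apply]
  rcases lt_trichotomy ((j : ℕ)) ((i : ℕ)) with hlt | heq | hgt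
  · rw [if_neg (by omega : ¬(i : ℕ) ≤ (j : ℕ)), zero_add,
      if_neg (by omega : ¬((i : ℕ) ≤ (j : ℕ) - 1 ∧ (j : ℕ) - 1 < n)), ite_self,
      if_neg (fun h => by rw [h] at hlt; omega)]
  · have e0 : (if 1 ≤ (j : ℕ) then
        (if (i : ℕ) ≤ (j : ℕ) - 1 ∧ (j : ℕ) - 1 < n
          then (-1 : F) ^ ((j : ℕ) - 1 - (i : ℕ)) else 0) else 0) = 0 := by
      by_cases hj1 : 1 ≤ (j : ℕ)
      · rw [if_pos hj1, if_neg (by omega)]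
      · rw [if_neg hj1]
    rw [if_pos (by omega : (i : ℕ) ≤ (j : ℕ)), e0, add_zero,
      if_pos (Fin.ext heq.symm), negpow ((j : ℕ) - (i : ℕ)) 0 (by omega), pow_zero]
  · rw [if_pos (by omega : (i : ℕ) ≤ (j : ℕ)), if_pos (by omega : 1 ≤ (j : ℕ)),
      if_pos ⟨by omega, by omega⟩,
      if_neg (by intro h; exact absurd (congrArg Fin.val h) (by omega)),
      negpow ((j : ℕ) - (i : ℕ)) (((j : ℕ) - 1) - (i : ℕ) + 1) (by omega), pow_succ]
    ring

lemma SmatT_mul (hn : 1 ≤ n) :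
    (Smat (F := F) n - ((-1 : F) ^ (n + 1)) • 1) * (1 + Nm n)
      = (-(2 * (-1 : F) ^ (n + 1))) • Nm n := by
  have hc : Commute (1 + Nm (F := F) n) (Smat n) := by
    unfold Commute SemiconjBy
    rw [add_mul, mul_add, one_mul, mul_one, NS_comm]
  rw [sub_mul, ← hc.eq, key1 hn, Matrix.smul_mul, one_mul, smul_sub, smul_add]
  module

lemma commT (hn : 1 ≤ n) :
    Commute (Smat (F := F) n - ((-1 : F) ^ (n + 1)) • 1) (1 + Nm n) := by
  have hc : Commute (1 + Nm (F := F) n) (Smat n) := by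
    unfold Commute SemiconjBy
    rw [add_mul, mul_add, one_mul, mul_one, NS_comm]
  exact (Commute.sub_left hc.symm (Commute.smul_left (Commute.one_left _) _))

lemma Tpow_mul (hn : 1 ≤ n) (k : ℕ) :
    (Smat (F := F) n - ((-1 : F) ^ (n + 1)) • 1) ^ k * (1 + Nm n) ^ k
      = ((-(2 * (-1 : F) ^ (n + 1))) ^ k) • (Nm n) ^ k := by
  rw [← Commute.mul_pow (commT hn), SmatT_mul hn, _root_.smul_pow]

lemma Upow_Vpow (k : ℕ) : (1 + Nm (F := F) n) ^ k * (Vm n) ^ k = 1 := by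
  have hcomm : Commute (1 + Nm (F := F) n) (Vm n) := by
    unfold Commute SemiconjBy
    rw [UVone, VUone]
  rw [← Commute.mul_pow hcomm, UVone, one_pow]

lemma Tpow_n (hn : 1 ≤ n) :
    (Smat (F := F) n - ((-1 : F) ^ (n + 1)) • 1) ^ n = 0 := by
  have h := Tpow_mul (F := F) hn n
  rw [Npow_n, smul_zero] at h
  calc (Smat (F := F) n - ((-1 : F) ^ (n + 1)) • 1) ^ n
      = (Smat (F := F) n - ((-1 : F) ^ (n + 1)) • 1) ^ n * ((1 + Nm n) ^ n * (Vm n) ^ n) := by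
        rw [Upow_Vpow, mul_one]
    _ = 0 := by rw [← mul_assoc, h, zero_mul]

lemma Tpow_pred (hn : 1 ≤ n) (hchar : ringChar F ≠ 2) :
    (Smat (F := F) n - ((-1 : F) ^ (n + 1)) • 1) ^ (n - 1) ≠ 0 := by
  intro h0
  have h := Tpow_mul (F := F) hn (n - 1)
  rw [h0, zero_mul] at h
  have hval := congrFun (congrFun h.symm ⟨0, by omega⟩) ⟨n - 1, by omega⟩
  rw [Matrix.smul_apply, Matrix.zero_apply] at hval
  have hN : ((Nm (F := F) n) ^ (n - 1)) ⟨0, by omega⟩ ⟨n - 1, by omega⟩ = 1 := by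
    have h2 := ent_Npow (F := F) (n := n) (n - 1) 0 (n - 1)
    rw [ent, dif_pos ⟨by omega, by omega⟩] at h2
    rw [h2, if_pos (by omega)]
  rw [hN, smul_eq_mul, mul_one] at hval
  have hc : (-(2 * (-1 : F) ^ (n + 1))) ≠ 0 := by
    apply neg_ne_zero.2
    exact mul_ne_zero (Ring.two_ne_zero hchar) (pow_ne_zero _ (neg_ne_zero.2 one_ne_zero))
  exact pow_ne_zero (n - 1) hc hval

lemma minpoly_Smat (hn : 1 ≤ n) (hchar : ringChar F ≠ 2) :
    minpoly F (Smat (F := F) n) = (X - C ((-1 : F) ^ (n + 1))) ^ n := by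
  set ε : F := (-1 : F) ^ (n + 1) with hε
  have hint : IsIntegral F (Smat (F := F) n) :=
    ⟨(Smat (F := F) n).charpoly, Matrix.charpoly_monic _, Matrix.aeval_self_charpoly _⟩
  have haev : ∀ k : ℕ, aeval (Smat (F := F) n) ((X - C ε) ^ k)
      = (Smat (F := F) n - ε • 1) ^ k := by
    intro k
    rw [map_pow, map_sub, aeval_X, aeval_C, Algebra.algebraMap_eq_smul_one]
  have hd : minpoly F (Smat (F := F) n) ∣ (X - C ε) ^ n :=
    minpoly.dvd F _ (by rw [haev n, Tpow_n hn])
  have hprime : Prime (X - C ε) := (Polynomial.irreducible_X_sub_C ε).prime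
  obtain ⟨k, hk, hassoc⟩ := (dvd_prime_pow hprime n).mp hd
  have heq : minpoly F (Smat (F := F) n) = (X - C ε) ^ k :=
    Polynomial.eq_of_monic_of_associated (minpoly.monic hint)
      ((Polynomial.monic_X_sub_C ε).pow k) hassoc
  have hkn : k = n := by
    by_contra hne
    have hdd : minpoly F (Smat (F := F) n) ∣ (X - C ε) ^ (n - 1) := by
      rw [heq]; exact pow_dvd_pow _ (by omega)
    obtain ⟨q, hq⟩ := hdd
    have : (Smat (F := F) n - ε • 1) ^ (n - 1) = 0 := by
      rw [← haev (n - 1), hq, _root_.map_mul, minpoly.aeval, zero_mul]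
    exact Tpow_pred hn hchar this
  rw [heq, hkn]

lemma charpoly_Smat (hn : 1 ≤ n) (hchar : ringChar F ≠ 2) :
    minpoly F (Smat (F := F) n) = (Smat (F := F) n).charpoly := by
  apply Polynomial.eq_of_dvd_of_natDegree_le_of_leadingCoeff
    (Matrix.minpoly_dvd_charpoly _)
  · rw [Matrix.charpoly_natDegree_eq_dim, Fintype.card_fin, minpoly_Smat hn hchar,
      Polynomial.natDegree_pow, Polynomial.natDegree_X_sub_C, mul_one]
  · rw [(Matrix.charpoly_monic _).leadingCoeff, minpoly_Smat hn hchar,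
      ((Polynomial.monic_X_sub_C _).pow n).leadingCoeff]

lemma Bform (hn : 1 ≤ n) :
    (GammaMatrix F n)⁻¹ * (GammaMatrix F n)ᵀ = Smat (F := F) n := by
  rw [Ginv_eq hn, Ginv_mulGt hn]

lemma mem_iff (hn : 1 ≤ n) (X : Matrix (Fin n) (Fin n) F) :
    X ∈ lieAlgOfForm (GammaMatrix F n) ↔ ∀ i j : ℕ, i < n → j < n →
      (-1 : F) ^ j * ent X (n - 1 - j) i
        + (if 1 ≤ j then (-1 : F) ^ (j + 1) * ent X (n - j) i else 0)
        + ((-1 : F) ^ (i + n + 1) * ent X (n - 1 - i) j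
        + (if 1 ≤ i then (-1 : F) ^ (i + n + 1) * ent X (n - i) j else 0)) = 0 := by
  constructor
  · intro hm i j hi hj
    have h2 := congrFun (congrFun
      (show Xᵀ * GammaMatrix F n + GammaMatrix F n * X = 0 from hm) ⟨i, hi⟩) ⟨j, hj⟩
    rw [Matrix.add_apply, tmulG_apply hn, Gmul_apply hn, Matrix.zero_apply] at h2
    exact h2
  · intro h
    show Xᵀ * GammaMatrix F n + GammaMatrix F n * X = 0
    ext i j
    rw [Matrix.add_apply, tmulG_apply hn, Gmul_apply hn, Matrix.zero_apply]
    exact h i j i.2 j.2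

/-- reverse direction: the explicit matrices satisfy the Lie algebra condition. -/
lemma toeplitz_mem (hn : 1 ≤ n) (X : Matrix (Fin n) (Fin n) F)
    (h1 : ∀ i j : Fin n, ¬((i : ℕ) < (j : ℕ) ∧ ((j : ℕ) - (i : ℕ)) % 2 = 1) → X i j = 0)
    (h2 : ∀ i j k l : Fin n, (j : ℕ) - (i : ℕ) = (l : ℕ) - (k : ℕ) →
      (i : ℕ) < (j : ℕ) → (k : ℕ) < (l : ℕ) → X i j = X k l) :
    X ∈ lieAlgOfForm (GammaMatrix F n) := by
  classical
  set f : ℕ → F := fun d => if h : 0 < d ∧ d < n ∧ d % 2 = 1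
    then X ⟨0, by omega⟩ ⟨d, h.2.1⟩ else 0 with hf
  have hf0 : ∀ d, d % 2 = 0 → f d = 0 := by
    intro d hd
    simp only [hf]
    rw [dif_neg (by omega)]
  have hent : ∀ p q : ℕ, p < n → q < n → ent X p q = f (q - p) := by
    intro p q hp hq
    rw [ent, dif_pos ⟨hp, hq⟩]
    by_cases hpq : p < q ∧ (q - p) % 2 = 1
    · have hv : f (q - p) = X ⟨0, by omega⟩ ⟨q - p, by omega⟩ := by
        simp only [hf]
        rw [dif_pos (⟨by omega, by omega, hpq.2⟩ : 0 < q - p ∧ q - p < n ∧ (q - p) % 2 = 1)]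
      rw [hv]
      exact h2 ⟨p, hp⟩ ⟨q, hq⟩ ⟨0, by omega⟩ ⟨q - p, by omega⟩ (by simp) hpq.1 (by simp; omega)
    · rw [h1 ⟨p, hp⟩ ⟨q, hq⟩ hpq]
      have hz : ¬(0 < q - p ∧ q - p < n ∧ (q - p) % 2 = 1) := by
        rcases Nat.lt_or_ge p q with hh | hh
        · intro hc; exact hpq ⟨hh, hc.2.2⟩
        · intro hc; omega
      simp only [hf]
      rw [dif_neg hz]
  rw [mem_iff hn]
  intro i j hi hj
  have e1 : ent X (n - 1 - j) i = f ((i + j + 1) - n) := by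
    rw [hent _ _ (by omega) hi]; congr 1; omega
  have e3 : ent X (n - 1 - i) j = f ((i + j + 1) - n) := by
    rw [hent _ _ (by omega) hj]; congr 1; omega
  rw [e1, e3]
  by_cases hi1 : 1 ≤ i
  · by_cases hj1 : 1 ≤ j
    · have e2 : ent X (n - j) i = f ((i + j) - n) := by
        rw [hent _ _ (by omega) hi]; congr 1; omega
      have e4 : ent X (n - i) j = f ((i + j) - n) := by
        rw [hent _ _ (by omega) hj]; congr 1; omega
      rw [if_pos hj1, if_pos hi1, e2, e4]
      by_cases hpar : (i + j + n) % 2 = 0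
      · rw [hf0 ((i + j) - n) (by omega), mul_zero, mul_zero, add_zero, add_zero,
          negpow (i + n + 1) (j + 1) (by omega), pow_succ]
        ring
      · rw [hf0 ((i + j + 1) - n) (by omega), negpow (i + n + 1) j (by omega), pow_succ]
        ring
    · rw [if_neg hj1, if_pos hi1]
      have e4 : ent X (n - i) j = f ((i + j) - n) := by
        rw [hent _ _ (by omega) hj]; congr 1; omega
      rw [e4, hf0 ((i + j + 1) - n) (by omega), hf0 ((i + j) - n) (by omega)]
      ring
  · rw [if_neg hi1]
    have hv : f ((i + j) - n) = 0 := hf0 _ (by omega)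
    by_cases hj1 : 1 ≤ j
    · have e2 : ent X (n - j) i = f ((i + j) - n) := by
        rw [hent _ _ (by omega) hi]; congr 1; omega
      rw [if_pos hj1, e2, hv, hf0 ((i + j + 1) - n) (by omega)]
      ring
    · rw [if_neg hj1, hf0 ((i + j + 1) - n) (by omega)]
      ring

/-- antidiagonal reindexing with alternating sign. -/
def wfun (X : Matrix (Fin n) (Fin n) F) (a b : ℕ) : F :=
  if h : a < n ∧ b < n then (-1 : F) ^ a * X ⟨a, h.1⟩ ⟨n - 1 - b, by omega⟩ else 0

lemma wfun_oob (X : Matrix (Fin n) (Fin n) F) (a b : ℕ) (h : n ≤ a ∨ n ≤ b) :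
    wfun X a b = 0 := dif_neg (by omega)

lemma ent_w (X : Matrix (Fin n) (Fin n) F) (p b : ℕ) (hp : p < n) (hb : b < n) :
    ent X p (n - 1 - b) = (-1 : F) ^ p * wfun X p b := by
  rw [ent, dif_pos ⟨hp, by omega⟩, wfun, dif_pos ⟨hp, hb⟩, ← mul_assoc,
    negpow_mul_self, one_mul]

lemma X_eq_wfun (X : Matrix (Fin n) (Fin n) F) (i j : Fin n) :
    X i j = (-1 : F) ^ (i : ℕ) * wfun X (i : ℕ) (n - 1 - (j : ℕ)) := by
  have h := ent_w X (i : ℕ) (n - 1 - (j : ℕ)) i.2 (by have := j.2; omega)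
  rw [show n - 1 - (n - 1 - (j : ℕ)) = (j : ℕ) from by have := j.2; omega] at h
  rw [← h, ent, dif_pos ⟨i.2, j.2⟩]

section Forward

variable (hn : 1 ≤ n) (hchar : ringChar F ≠ 2) (X : Matrix (Fin n) (Fin n) F)
  (hm : X ∈ lieAlgOfForm (GammaMatrix F n))

omit hn hchar hm in
lemma mulmul (c d : ℕ) (x : F) : (-1 : F) ^ c * ((-1 : F) ^ d * x) = (-1 : F) ^ (c + d) * x := by
  rw [pow_add]; ring

include hn hm in
lemma wE : ∀ a b : ℕ, a < n → b < n →
    (-1 : F) ^ (n - 1) * (wfun X a b + wfun X (a + 1) b)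
      + wfun X b a - wfun X (b + 1) a = 0 := by
  intro a b ha hb
  have h := (mem_iff hn X).mp hm (n - 1 - b) (n - 1 - a) (by omega) (by omega)
  rw [show n - 1 - (n - 1 - a) = a from by omega,
    show n - 1 - (n - 1 - b) = b from by omega] at h
  rw [ent_w X a b ha hb, ent_w X b a hb ha, mulmul, mulmul,
    negpow (n - 1 - a + a) (n - 1) (by omega),
    negpow (n - 1 - b + n + 1 + b) 0 (by omega), pow_zero, one_mul] at h
  by_cases ha1 : a + 1 < n
  · rw [if_pos (by omega : 1 ≤ n - 1 - a),
      show n - (n - 1 - a) = a + 1 from by omega,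
      ent_w X (a + 1) b ha1 hb, mulmul,
      negpow (n - 1 - a + 1 + (a + 1)) (n - 1) (by omega)] at h
    by_cases hb1 : b + 1 < n
    · rw [if_pos (by omega : 1 ≤ n - 1 - b),
        show n - (n - 1 - b) = b + 1 from by omega,
        ent_w X (b + 1) a hb1 ha, mulmul,
        negpow (n - 1 - b + n + 1 + (b + 1)) 1 (by omega), pow_one] at h
      linear_combination h
    · rw [if_neg (by omega : ¬ 1 ≤ n - 1 - b)] at h
      rw [wfun_oob X (b + 1) a (by omega)]
      linear_combination h
  · rw [if_neg (by omega : ¬ 1 ≤ n - 1 - a)] at h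
    rw [wfun_oob X (a + 1) b (by omega)]
    by_cases hb1 : b + 1 < n
    · rw [if_pos (by omega : 1 ≤ n - 1 - b),
        show n - (n - 1 - b) = b + 1 from by omega,
        ent_w X (b + 1) a hb1 ha, mulmul,
        negpow (n - 1 - b + n + 1 + (b + 1)) 1 (by omega), pow_one] at h
      linear_combination h
    · rw [if_neg (by omega : ¬ 1 ≤ n - 1 - b)] at h
      rw [wfun_oob X (b + 1) a (by omega)]
      linear_combination h

include hn hchar hm in
lemma hdagger : ∀ a b : ℕ, a < n → b < n →
    wfun X (a + 1) b = (-1 : F) ^ (n - 1) * wfun X (b + 1) a := by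
  intro a b ha hb
  have h1 := wE hn X hm a b ha hb
  have h2 := wE hn X hm b a hb ha
  have hs : (-1 : F) ^ (n - 1) * (-1 : F) ^ (n - 1) = 1 := negpow_mul_self _
  have key : (2 : F) * wfun X (a + 1) b
      = 2 * ((-1 : F) ^ (n - 1) * wfun X (b + 1) a) := by
    linear_combination ((-1 : F) ^ (n - 1)) * h1 - h2
      - (wfun X a b + wfun X (a + 1) b) * hs
  exact mul_left_cancel₀ (Ring.two_ne_zero hchar) key

include hn hchar hm in
lemma hsym : ∀ a b : ℕ, wfun X b a = (-1 : F) ^ n * wfun X a b := by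
  have hpow : (-1 : F) ^ (n - 1) * (-1 : F) = (-1 : F) ^ n := by
    rw [← pow_succ, show n - 1 + 1 = n from by omega]
  intro a b
  by_cases hab : a < n ∧ b < n
  · have h1 := wE hn X hm a b hab.1 hab.2
    have hd := hdagger hn hchar X hm a b hab.1 hab.2
    have hs : (-1 : F) ^ (n - 1) * (-1 : F) ^ (n - 1) = 1 := negpow_mul_self _
    have e1 : wfun X b a = wfun X (b + 1) a
        - (-1 : F) ^ (n - 1) * wfun X a b - (-1 : F) ^ (n - 1) * wfun X (a + 1) b := by
      linear_combination h1
    rw [hd] at e1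
    have e2 : wfun X b a = -((-1 : F) ^ (n - 1) * wfun X a b) := by
      linear_combination e1 - wfun X (b + 1) a * hs
    rw [← hpow]
    linear_combination e2
  · rcases Nat.lt_or_ge a n with h | h
    · have hbn : n ≤ b := by omega
      rw [wfun_oob X b a (Or.inl hbn), wfun_oob X a b (Or.inr hbn), mul_zero]
    · rw [wfun_oob X b a (Or.inr h), wfun_oob X a b (Or.inl h), mul_zero]

include hn hchar hm in
lemma hanti : ∀ a b : ℕ, wfun X (a + 1) b = - wfun X a (b + 1) := by
  intro a b
  by_cases hab : a < n ∧ b < n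
  · have hd := hdagger hn hchar X hm a b hab.1 hab.2
    have hsy := hsym hn hchar X hm a (b + 1)
    have hs : (-1 : F) ^ (n - 1) * (-1 : F) ^ (n - 1) = 1 := negpow_mul_self _
    have hpow : (-1 : F) ^ (n - 1) * (-1 : F) = (-1 : F) ^ n := by
      rw [← pow_succ, show n - 1 + 1 = n from by omega]
    rw [hd, hsy]
    -- goal : s * (t * w a (b+1)) = - w a (b+1)  with  s * t = -1
    have hst : (-1 : F) ^ (n - 1) * (-1 : F) ^ n = -1 := by
      rw [← hpow]
      linear_combination (-1 : F) * hs
    linear_combination wfun X a (b + 1) * hst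
  · rcases Nat.lt_or_ge a n with h | h
    · have hbn : n ≤ b := by omega
      rw [wfun_oob X (a + 1) b (Or.inr hbn), wfun_oob X a (b + 1) (Or.inr (by omega)), neg_zero]
    · rw [wfun_oob X (a + 1) b (Or.inl (by omega)), wfun_oob X a (b + 1) (Or.inl h), neg_zero]

include hn hchar hm in
lemma hprop : ∀ a b : ℕ, wfun X a b = (-1 : F) ^ a * wfun X 0 (a + b) := by
  intro a
  induction a with
  | zero => intro b; rw [pow_zero, one_mul, Nat.zero_add]
  | succ a ih =>
    intro b
    rw [hanti hn hchar X hm a b, ih (b + 1),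
      show a + (b + 1) = a + 1 + b from by omega, pow_succ]
    ring

include hn hchar hm in
lemma hzero : ∀ m a b : ℕ, n - 1 - b ≤ m → n ≤ a + b → wfun X a b = 0 := by
  intro m
  induction m with
  | zero =>
    intro a b hb hab
    rcases Nat.lt_or_ge b n with h | h
    · rcases Nat.lt_or_ge a n with ha | ha
      · have hb' : b = n - 1 := by omega
        subst hb'
        have hd := hdagger hn hchar X hm (n - 1) (a - 1) (by omega) (by omega)
        rw [wfun_oob X (n - 1 + 1) (a - 1) (Or.inl (by omega)),
          show a - 1 + 1 = a from by omega] at hd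
        rcases mul_eq_zero.mp hd.symm with h' | h'
        · exact absurd h' (pow_ne_zero _ (neg_ne_zero.2 one_ne_zero))
        · exact h'
      · exact wfun_oob X a b (Or.inl ha)
    · exact wfun_oob X a b (Or.inr h)
  | succ m ih =>
    intro a b hb hab
    rcases Nat.lt_or_ge b (n - 1) with h | h
    · rw [show a = a - 1 + 1 from by omega, hanti hn hchar X hm (a - 1) b,
        ih (a - 1) (b + 1) (by omega) (by omega), neg_zero]
    · rcases Nat.lt_or_ge b n with h2 | h2
      · rcases Nat.lt_or_ge a n with ha | ha
        · have hb' : b = n - 1 := by omega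
          subst hb'
          have hd := hdagger hn hchar X hm (n - 1) (a - 1) (by omega) (by omega)
          rw [wfun_oob X (n - 1 + 1) (a - 1) (Or.inl (by omega)),
            show a - 1 + 1 = a from by omega] at hd
          rcases mul_eq_zero.mp hd.symm with h' | h'
          · exact absurd h' (pow_ne_zero _ (neg_ne_zero.2 one_ne_zero))
          · exact h'
        · exact wfun_oob X a b (Or.inl ha)
      · exact wfun_oob X a b (Or.inr h2)

include hn hchar hm in
lemma hparity : ∀ s : ℕ, (s + n) % 2 = 1 → wfun X 0 s = 0 := by
  intro s hs
  rcases Nat.lt_or_ge s n with hsn | hsn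
  · rcases Nat.even_or_odd s with he | ho
    · obtain ⟨t, ht⟩ := he
      have h1 := hsym hn hchar X hm t t
      rw [negpow n 1 (by omega), pow_one] at h1
      have h2 : wfun X t t = 0 := by
        have := mul_left_cancel₀ (Ring.two_ne_zero hchar)
          (show (2 : F) * wfun X t t = 2 * 0 from by linear_combination h1)
        simpa using this
      have h3 := hprop hn hchar X hm t t
      rw [h2, show t + t = s from by omega] at h3
      rcases mul_eq_zero.mp h3.symm with h' | h'
      · exact absurd h' (pow_ne_zero _ (neg_ne_zero.2 one_ne_zero))
      · exact h'
    · obtain ⟨t, ht⟩ := ho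
      have h1 := hsym hn hchar X hm t (t + 1)
      rw [negpow n 0 (by omega), pow_zero, one_mul] at h1
      have h2 := hanti hn hchar X hm t t
      have h3 : wfun X t (t + 1) = 0 := by
        have := mul_left_cancel₀ (Ring.two_ne_zero hchar)
          (show (2 : F) * wfun X t (t + 1) = 2 * 0 from by linear_combination h2 - h1)
        simpa using this
      have h4 := hprop hn hchar X hm t (t + 1)
      rw [h3, show t + (t + 1) = s from by omega] at h4
      rcases mul_eq_zero.mp h4.symm with h' | h'
      · exact absurd h' (pow_ne_zero _ (neg_ne_zero.2 one_ne_zero))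
      · exact h'
  · exact wfun_oob X 0 s (Or.inr hsn)

include hn hchar hm in
lemma forward_condA : ∀ i j : Fin n,
    ¬((i : ℕ) < (j : ℕ) ∧ ((j : ℕ) - (i : ℕ)) % 2 = 1) → X i j = 0 := by
  intro i j hc
  have hi := i.2; have hj := j.2
  rw [X_eq_wfun X i j]
  rcases Nat.lt_or_ge ((j : ℕ)) ((i : ℕ)) with h | h
  · rw [hzero hn hchar X hm (n - 1) (i : ℕ) (n - 1 - (j : ℕ)) (by omega) (by omega), mul_zero]
  · have hev : ((j : ℕ) - (i : ℕ)) % 2 = 0 := by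
      rcases Nat.lt_or_ge ((i : ℕ)) ((j : ℕ)) with h2 | h2
      · omega
      · omega
    rw [hprop hn hchar X hm, hparity hn hchar X hm ((i : ℕ) + (n - 1 - (j : ℕ))) (by omega),
      mul_zero, mul_zero]

include hn hchar hm in
lemma forward_condB : ∀ i j k l : Fin n, (j : ℕ) - (i : ℕ) = (l : ℕ) - (k : ℕ) →
    (i : ℕ) < (j : ℕ) → (k : ℕ) < (l : ℕ) → X i j = X k l := by
  have e : ∀ p q : Fin n, (p : ℕ) < (q : ℕ) →
      X p q = wfun X 0 (n - 1 - ((q : ℕ) - (p : ℕ))) := by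
    intro p q hpq
    have hq := q.2
    rw [X_eq_wfun X p q, hprop hn hchar X hm, ← mul_assoc, negpow_mul_self, one_mul,
      show (p : ℕ) + (n - 1 - (q : ℕ)) = n - 1 - ((q : ℕ) - (p : ℕ)) from by omega]
  intro i j k l hd hij hkl
  rw [e i j hij, e k l hkl, hd]

end Forward


lemma char_iff (hn : 1 ≤ n) (hchar : ringChar F ≠ 2) (X : Matrix (Fin n) (Fin n) F) :
    X ∈ lieAlgOfForm (GammaMatrix F n) ↔
      ((∀ i j : Fin n, ¬((i : ℕ) < (j : ℕ) ∧ ((j : ℕ) - (i : ℕ)) % 2 = 1) → X i j = 0) ∧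
        ∀ i j k l : Fin n, (j : ℕ) - (i : ℕ) = (l : ℕ) - (k : ℕ) →
          (i : ℕ) < (j : ℕ) → (k : ℕ) < (l : ℕ) → X i j = X k l) :=
  ⟨fun hm => ⟨forward_condA hn hchar X hm, forward_condB hn hchar X hm⟩,
    fun h => toeplitz_mem hn X h.1 h.2⟩

lemma Npow_fin (d : ℕ) (i j : Fin n) :
    ((Nm (F := F) n) ^ d) i j = if (i : ℕ) + d = (j : ℕ) then 1 else 0 := by
  have h := ent_Npow (F := F) (n := n) d (i : ℕ) (j : ℕ)
  rw [ent, dif_pos ⟨i.2, j.2⟩] at h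
  rw [h]
  by_cases hc : (i : ℕ) + d = (j : ℕ)
  · rw [if_pos ⟨hc, j.2⟩, if_pos hc]
  · rw [if_neg (by tauto), if_neg hc]

/-- every element of the Lie algebra is a polynomial in the shift matrix. -/
lemma rep_poly (hn : 1 ≤ n) (hchar : ringChar F ≠ 2) (X : Matrix (Fin n) (Fin n) F)
    (hm : X ∈ lieAlgOfForm (GammaMatrix F n)) :
    X = ∑ d ∈ Finset.range n, ent X 0 d • (Nm (F := F) n) ^ d := by
  obtain ⟨hA, hB⟩ := (char_iff hn hchar X).mp hm
  ext i j
  rw [Matrix.sum_apply]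
  have hterm : ∀ d ∈ Finset.range n,
      (ent X 0 d • (Nm (F := F) n) ^ d) i j
        = if d = (j : ℕ) - (i : ℕ) ∧ (i : ℕ) ≤ (j : ℕ) then ent X 0 d else 0 := by
    intro d _
    rw [Matrix.smul_apply, Npow_fin, smul_eq_mul]
    by_cases hc : (i : ℕ) + d = (j : ℕ)
    · rw [if_pos hc, mul_one, if_pos ⟨by omega, by omega⟩]
    · rw [if_neg hc, mul_zero, if_neg (by omega)]
  rw [Finset.sum_congr rfl hterm]
  by_cases hij : (i : ℕ) ≤ (j : ℕ)
  · have hsimp : ∀ d, (d = (j : ℕ) - (i : ℕ) ∧ (i : ℕ) ≤ (j : ℕ)) ↔ d = (j : ℕ) - (i : ℕ) := by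
      intro d; constructor
      · exact fun h => h.1
      · exact fun h => ⟨h, hij⟩
    rw [Finset.sum_congr rfl (fun d _ => by rw [if_congr (hsimp d) rfl rfl]),
      Finset.sum_ite_eq' (Finset.range n) ((j : ℕ) - (i : ℕ)) (fun d => ent X 0 d),
      if_pos (Finset.mem_range.2 (by have := j.2; omega))]
    rw [ent, dif_pos ⟨by omega, by have := j.2; omega⟩]
    by_cases hlt : (i : ℕ) < (j : ℕ) ∧ ((j : ℕ) - (i : ℕ)) % 2 = 1
    · exact hB i j ⟨0, by omega⟩ ⟨(j : ℕ) - (i : ℕ), by have := j.2; omega⟩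
        (by simp) hlt.1 (by simp; omega)
    · rw [hA i j hlt, hA ⟨0, by omega⟩ ⟨(j : ℕ) - (i : ℕ), by have := j.2; omega⟩
        (by simp; omega)]
  · rw [Finset.sum_eq_zero (fun d _ => if_neg (by omega)), hA i j (by omega)]

lemma abelian (hn : 1 ≤ n) (hchar : ringChar F ≠ 2) :
    IsLieAbelian (lieAlgOfForm (GammaMatrix F n) : LieSubalgebra F (Matrix (Fin n) (Fin n) F)) := by
  constructor
  intro x y
  have hc : Commute (x : Matrix (Fin n) (Fin n) F) (y : Matrix (Fin n) (Fin n) F) := by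
    rw [rep_poly hn hchar _ x.2, rep_poly hn hchar _ y.2]
    refine Commute.sum_left _ _ _ (fun d _ => Commute.sum_right _ _ _ (fun e _ => ?_))
    exact (((Commute.refl (Nm (F := F) n)).pow_pow d e).smul_left _).smul_right _
  have hz : (⁅x, y⁆ : ↥(lieAlgOfForm (GammaMatrix F n))).val = 0 := by
    rw [LieSubalgebra.coe_bracket, Ring.lie_def, sub_eq_zero]
    exact hc
  exact Subtype.ext hz


lemma finrank_L (hn : 1 ≤ n) (hchar : ringChar F ≠ 2) :
    Module.finrank F ↥(lieAlgOfForm (GammaMatrix F n)) = n / 2 := by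
  classical
  have hlt : ∀ t : Fin (n / 2), 2 * (t : ℕ) + 1 < n := by
    intro t; have := t.2; omega
  -- entry formula for the candidate matrices
  have hYe : ∀ (c : Fin (n / 2) → F) (i j : Fin n),
      (∑ t : Fin (n / 2), c t • (Nm (F := F) n) ^ (2 * (t : ℕ) + 1)) i j
        = if h : (i : ℕ) < (j : ℕ) ∧ ((j : ℕ) - (i : ℕ)) % 2 = 1
            then c ⟨((j : ℕ) - (i : ℕ) - 1) / 2, by have := j.2; omega⟩ else 0 := by
    intro c i j
    rw [Matrix.sum_apply]
    by_cases h : (i : ℕ) < (j : ℕ) ∧ ((j : ℕ) - (i : ℕ)) % 2 = 1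
    · rw [dif_pos h]
      have hj := j.2
      rw [Finset.sum_eq_single (⟨((j : ℕ) - (i : ℕ) - 1) / 2, by omega⟩ : Fin (n / 2))]
      · rw [Matrix.smul_apply, Npow_fin, if_pos (by simp; omega), smul_eq_mul, mul_one]
      · intro b _ hb
        rw [Matrix.smul_apply, Npow_fin, if_neg, smul_zero]
        intro hbc
        exact hb (Fin.ext (by simp at hbc ⊢; omega))
      · intro hmem
        exact absurd (Finset.mem_univ _) hmem
    · rw [dif_neg h]
      apply Finset.sum_eq_zero
      intro b _
      rw [Matrix.smul_apply, Npow_fin, if_neg (fun hc => h ⟨by omega, by omega⟩), smul_zero]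
  let φ : ↥(lieAlgOfForm (GammaMatrix F n)) →ₗ[F] (Fin (n / 2) → F) :=
    { toFun := fun x => fun t =>
        (x : Matrix (Fin n) (Fin n) F) ⟨0, by omega⟩ ⟨2 * (t : ℕ) + 1, hlt t⟩
      map_add' := fun x y => rfl
      map_smul' := fun r x => rfl }
  have hinj : Function.Injective φ := by
    intro x y hxy
    apply Subtype.ext
    obtain ⟨hAx, hBx⟩ := (char_iff hn hchar _).mp x.2
    obtain ⟨hAy, hBy⟩ := (char_iff hn hchar _).mp y.2
    ext i j
    by_cases hc : (i : ℕ) < (j : ℕ) ∧ ((j : ℕ) - (i : ℕ)) % 2 = 1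
    · have hj := j.2
      set t : Fin (n / 2) := ⟨((j : ℕ) - (i : ℕ) - 1) / 2, by omega⟩ with ht
      have h1 := hBx i j ⟨0, by omega⟩ ⟨2 * (t : ℕ) + 1, hlt t⟩ (by simp only [ht, Fin.val_mk]; omega) hc.1
        (by simp)
      have h2 := hBy i j ⟨0, by omega⟩ ⟨2 * (t : ℕ) + 1, hlt t⟩ (by simp only [ht, Fin.val_mk]; omega) hc.1
        (by simp)
      rw [h1, h2]
      exact congrFun hxy t
    · rw [hAx i j hc, hAy i j hc]
  have hsurj : Function.Surjective φ := by
    intro c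
    have hmem : (∑ t : Fin (n / 2), c t • (Nm (F := F) n) ^ (2 * (t : ℕ) + 1))
        ∈ lieAlgOfForm (GammaMatrix F n) := by
      apply (char_iff hn hchar _).mpr
      constructor
      · intro i j hij
        rw [hYe, dif_neg hij]
      · intro i j k l hd hij hkl
        rw [hYe, hYe]
        by_cases hodd : ((j : ℕ) - (i : ℕ)) % 2 = 1
        · rw [dif_pos ⟨hij, hodd⟩, dif_pos ⟨hkl, by omega⟩]
          congr 1
          exact Fin.ext (by simp; omega)
        · rw [dif_neg (fun hcc => hodd hcc.2), dif_neg (fun hcc => hodd (by omega))]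
      
    refine ⟨⟨_, hmem⟩, ?_⟩
    funext t
    show (∑ t : Fin (n / 2), c t • (Nm (F := F) n) ^ (2 * (t : ℕ) + 1)) _ _ = c t
    rw [hYe, dif_pos ⟨by simp, by simp [Nat.add_mod, Nat.mul_mod_right]⟩]
    congr 1
    exact Fin.ext (by simp)
  rw [LinearEquiv.finrank_eq (LinearEquiv.ofBijective φ ⟨hinj, hsurj⟩),
    Module.finrank_fin_fun]

end Stmt18Aux

/-- For `char F ≠ 2` and `n ≥ 1`, the matrix `Γ_n` is invertible, its asymmetry
`S_n = Γ_n⁻¹ Γ_nᵀ` is cyclic with minimal polynomial `(X − ε)^n`, `ε = (−1)^(n+1)`, and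
`L(Γ_n)` is abelian of dimension `⌊n/2⌋`, consisting of the upper triangular matrices
with constant super-diagonals whose super-diagonals at even distance from the main
diagonal vanish. -/
theorem stmt18 (n : ℕ) (hn : 1 ≤ n) (hchar : ringChar F ≠ 2) :
    IsUnit (GammaMatrix F n) ∧
      minpoly F ((GammaMatrix F n)⁻¹ * (GammaMatrix F n)ᵀ)
        = (Polynomial.X - Polynomial.C ((-1 : F) ^ (n + 1))) ^ n ∧
      minpoly F ((GammaMatrix F n)⁻¹ * (GammaMatrix F n)ᵀ)
        = ((GammaMatrix F n)⁻¹ * (GammaMatrix F n)ᵀ).charpoly ∧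
      (∀ X : Matrix (Fin n) (Fin n) F,
        X ∈ lieAlgOfForm (GammaMatrix F n) ↔
          ((∀ i j : Fin n, ¬((i : ℕ) < (j : ℕ) ∧ ((j : ℕ) - (i : ℕ)) % 2 = 1) → X i j = 0) ∧
            ∀ i j k l : Fin n, (j : ℕ) - (i : ℕ) = (l : ℕ) - (k : ℕ) →
              (i : ℕ) < (j : ℕ) → (k : ℕ) < (l : ℕ) → X i j = X k l)) ∧
      IsLieAbelian (lieAlgOfForm (GammaMatrix F n)) ∧
      Module.finrank F (lieAlgOfForm (GammaMatrix F n)) = n / 2 := by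
  have hB := Stmt18Aux.Bform (F := F) hn
  refine ⟨Stmt18Aux.isUnit_G hn, ?_, ?_, ?_, ?_, ?_⟩
  · rw [hB]; exact Stmt18Aux.minpoly_Smat hn hchar
  · rw [hB]; exact Stmt18Aux.charpoly_Smat hn hchar
  · exact fun X => Stmt18Aux.char_iff hn hchar X
  · exact Stmt18Aux.abelian hn hchar
  · exact Stmt18Aux.finrank_L hn hchar
end
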